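/- arXiv:1605.04123 — 4 statements merged into one kernel-verified Lean document; each statement's English description precedes it below -/
import Mathlib

section
/- Let 0 < σ₀ ≤ σ₁, let σ : ℝ → ℝ be measurable with σ₀ ≤ σ(x) ≤ σ₁ for almost every x ∈ (0,1), let f ∈ L²(0,1), and define v(x) = ∫_x^1 (1/σ(t)) (∫_0^t f(s) ds) dt. Then for every Lipschitz function w : ℝ → ℝ with w(1) = 0, one has ∫_0^1 σ(x) v'(x) w'(x) dx = ∫_0^1 f(x) w(x) dx, where v' and w' denote the almost-everywhere defined derivatives of v and w. -/
open MeasureTheory intervalIntegral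


open MeasureTheory intervalIntegral Set Filter Topology

lemma ae_tendsto_interval_average {h : ℝ → ℝ} (hh : Integrable h volume) :
    ∀ᵐ x ∂(volume : Measure ℝ),
      Tendsto (fun y => (∫ t in x..y, h t) / (y - x)) (𝓝[≠] x) (𝓝 (h x)) := by
  have hloc : LocallyIntegrable h volume := hh.locallyIntegrable
  filter_upwards [(IsUnifLocDoublingMeasure.vitaliFamily (volume : Measure ℝ) 1).ae_tendsto_average hloc]
    with x hx
  rw [← nhdsLT_sup_nhdsGT, tendsto_sup]
  constructor
  · have hl := hx.comp (Real.tendsto_Icc_vitaliFamily_left x)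
    have : (fun y => (∫ t in x..y, h t) / (y - x)) =ᶠ[𝓝[<] x] (fun y => ⨍ t in Icc y x, h t) := by
      filter_upwards [self_mem_nhdsWithin] with y (hy : y < x)
      rw [average_eq, measureReal_def, Measure.restrict_apply_univ, intervalIntegral.integral_symm,
        intervalIntegral.integral_of_le hy.le, ← integral_Icc_eq_integral_Ioc,
        Real.volume_Icc, smul_eq_mul, ENNReal.toReal_ofReal (by linarith)]
      rw [show y - x = -(x - y) by ring, div_neg, neg_div, neg_neg, div_eq_inv_mul]
    exact Tendsto.congr' this.symm hl
  · have hr := hx.comp (Real.tendsto_Icc_vitaliFamily_right x)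
    have : (fun y => (∫ t in x..y, h t) / (y - x)) =ᶠ[𝓝[>] x] (fun y => ⨍ t in Icc x y, h t) := by
      filter_upwards [self_mem_nhdsWithin] with y (hy : x < y)
      rw [average_eq, measureReal_def, Measure.restrict_apply_univ, intervalIntegral.integral_of_le hy.le, ← integral_Icc_eq_integral_Ioc,
        Real.volume_Icc, smul_eq_mul, ENNReal.toReal_ofReal (by linarith)]
      rw [div_eq_inv_mul]
    exact Tendsto.congr' this.symm hr

lemma tendsto_boundary_avg {w : ℝ → ℝ} (wc : Continuous w) (c : ℝ) :
    Tendsto (fun n : ℕ => (∫ x in c..(c + 1/(n+1)), w x) / (1/(n+1) : ℝ)) atTop (𝓝 (w c)) := by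
  have hW : HasDerivAt (fun u => ∫ x in c..u, w x) (w c) c :=
    intervalIntegral.integral_hasDerivAt_right (wc.intervalIntegrable c c)
      (wc.stronglyMeasurableAtFilter volume (𝓝 c)) wc.continuousAt
  rw [hasDerivAt_iff_tendsto_slope] at hW
  have hφ : Tendsto (fun n : ℕ => c + 1/(n+1)) atTop (𝓝[≠] c) := by
    apply tendsto_nhdsWithin_of_tendsto_nhds_of_eventually_within
    · simpa using (tendsto_const_nhds (x := c)).add tendsto_one_div_add_atTop_nhds_zero_nat
    · filter_upwards with n
      have : (0:ℝ) < 1/(n+1) := by positivity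
      simp only [Set.mem_compl_iff, Set.mem_singleton_iff]
      intro hc; nlinarith [hc]
  have := hW.comp hφ
  refine this.congr fun n => ?_
  simp only [Function.comp, slope_def_field]
  rw [intervalIntegral.integral_same, add_sub_cancel_left]
  ring

lemma lipschitz_integral_deriv {K : NNReal} {w : ℝ → ℝ} (hw : LipschitzWith K w)
    {a b : ℝ} (hab : a ≤ b) : ∫ x in a..b, deriv w x = w b - w a := by
  have wc : Continuous w := hw.continuous
  set φ : ℕ → ℝ := fun n => 1/(n+1) with hφdef
  have hφpos : ∀ n, (0:ℝ) < φ n := fun n => by positivity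
  have hφ0 : Tendsto φ atTop (𝓝 0) := by
    simpa [hφdef] using tendsto_one_div_add_atTop_nhds_zero_nat (𝕜 := ℝ)
  -- pointwise a.e. convergence of difference quotients
  have key1 : ∀ᵐ x ∂(volume : Measure ℝ),
      Tendsto (fun n => (w (x + φ n) - w x) / φ n) atTop (𝓝 (deriv w x)) := by
    filter_upwards [hw.ae_differentiableAt (μ := volume)] with x hx
    have hd := hx.hasDerivAt
    rw [hasDerivAt_iff_tendsto_slope] at hd
    have hφ : Tendsto (fun n : ℕ => x + φ n) atTop (𝓝[≠] x) := by
      apply tendsto_nhdsWithin_of_tendsto_nhds_of_eventually_within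
      · simpa using (tendsto_const_nhds (x := x)).add hφ0
      · filter_upwards with n
        simp only [Set.mem_compl_iff, Set.mem_singleton_iff]
        intro hc; nlinarith [hφpos n, hc]
    refine (hd.comp hφ).congr fun n => ?_
    simp only [Function.comp, slope_def_field]
    rw [add_sub_cancel_left]
  -- dominated convergence
  have key2 : Tendsto (fun n => ∫ x in Set.Ioc a b, (w (x + φ n) - w x) / φ n)
      atTop (𝓝 (∫ x in Set.Ioc a b, deriv w x)) := by
    apply MeasureTheory.tendsto_integral_of_dominated_convergence (fun _ => (K:ℝ))
    · intro n
      exact ((wc.comp (continuous_id.add continuous_const)).sub wc).div_const _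
        |>.aestronglyMeasurable
    · exact integrableOn_const measure_Ioc_lt_top.ne
    · intro n
      filter_upwards with x
      rw [Real.norm_eq_abs, abs_div, abs_of_pos (hφpos n)]
      rw [div_le_iff₀ (hφpos n)]
      have := hw.dist_le_mul (x + φ n) x
      rw [Real.dist_eq, Real.dist_eq, add_sub_cancel_left, abs_of_pos (hφpos n)] at this
      linarith
    · exact ae_restrict_of_ae key1
  -- compute the integrals of difference quotients
  have key3 : ∀ n, ∫ x in Set.Ioc a b, (w (x + φ n) - w x) / φ n
      = (∫ x in b..(b + φ n), w x) / φ n - (∫ x in a..(a + φ n), w x) / φ n := by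
    intro n
    have i1 : IntervalIntegrable w volume a b := wc.intervalIntegrable _ _
    have i2 : IntervalIntegrable w volume b (b + φ n) := wc.intervalIntegrable _ _
    have i3 : IntervalIntegrable w volume a (a + φ n) := wc.intervalIntegrable _ _
    have i4 : IntervalIntegrable w volume (a + φ n) (b + φ n) := wc.intervalIntegrable _ _
    have e1 : ∫ x in Set.Ioc a b, (w (x + φ n) - w x) / φ n
        = ∫ x in a..b, (w (x + φ n) - w x) / φ n := (intervalIntegral.integral_of_le hab).symm
    have i5 : IntervalIntegrable (fun x => w (x + φ n)) volume a b :=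
      (wc.comp (continuous_id.add continuous_const)).intervalIntegrable _ _
    rw [e1, intervalIntegral.integral_div, intervalIntegral.integral_sub i5 i1,
      intervalIntegral.integral_comp_add_right (a := a) (b := b) (f := w) (φ n)]
    have adj1 : (∫ x in a..b, w x) + ∫ x in b..(b + φ n), w x = ∫ x in a..(b + φ n), w x :=
      intervalIntegral.integral_add_adjacent_intervals i1 i2
    have adj2 : (∫ x in a..(a + φ n), w x) + ∫ x in (a + φ n)..(b + φ n), w x
        = ∫ x in a..(b + φ n), w x :=
      intervalIntegral.integral_add_adjacent_intervals i3 i4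
    have : ∫ x in (a + φ n)..(b + φ n), w x
        = (∫ x in b..(b + φ n), w x) - (∫ x in a..(a + φ n), w x) + ∫ x in a..b, w x := by
      linarith
    rw [this]; ring
  have key4 : Tendsto (fun n => ∫ x in Set.Ioc a b, (w (x + φ n) - w x) / φ n)
      atTop (𝓝 (w b - w a)) := by
    simp only [key3]
    exact (tendsto_boundary_avg wc b).sub (tendsto_boundary_avg wc a)
  rw [intervalIntegral.integral_of_le hab]
  exact tendsto_nhds_unique key2 key4

/-- The explicit function `v(x) = ∫_x^1 (1/σ(t)) (∫_0^t f(s) ds) dt` is the variational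
solution of the mixed boundary value problem: for every Lipschitz `w` with `w(1) = 0`,
`∫_0^1 σ v' w' dx = ∫_0^1 f w dx`. -/
theorem explicit_solution_is_variational
    (σ₀ σ₁ : ℝ) (hσ₀ : 0 < σ₀) (hσ₀₁ : σ₀ ≤ σ₁)
    (σ : ℝ → ℝ) (hσm : Measurable σ)
    (hσb : ∀ᵐ x ∂volume, x ∈ Set.Ioo (0:ℝ) 1 → σ₀ ≤ σ x ∧ σ x ≤ σ₁)
    (f : ℝ → ℝ) (hfm : Measurable f) (hf : MemLp f 2 (volume.restrict (Set.Ioo (0:ℝ) 1)))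
    (v : ℝ → ℝ)
    (hv : v = fun x => ∫ t in x..(1:ℝ), (1 / σ t) * ∫ s in (0:ℝ)..t, f s)
    (w : ℝ → ℝ) (hw : ∃ K : NNReal, LipschitzWith K w) (hw1 : w 1 = 0) :
    (∫ x in (0:ℝ)..1, σ x * deriv v x * deriv w x) = ∫ x in (0:ℝ)..1, f x * w x := by
  obtain ⟨K, hwK⟩ := hw
  haveI : IsFiniteMeasure (volume.restrict (Set.Ioo (0:ℝ) 1)) :=
    ⟨by rw [Measure.restrict_apply_univ]; exact measure_Ioo_lt_top⟩
  -- the truncated function and its primitive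
  set ft : ℝ → ℝ := Set.indicator (Set.Ioo (0:ℝ) 1) f with hftdef
  have hftm : Measurable ft := hfm.indicator measurableSet_Ioo
  have hf1 : IntegrableOn f (Set.Ioo (0:ℝ) 1) volume :=
    memLp_one_iff_integrable.mp (hf.mono_exponent (by norm_num))
  have hfti : Integrable ft volume := (integrable_indicator_iff measurableSet_Ioo).2 hf1
  set F : ℝ → ℝ := fun t => ∫ s in (0:ℝ)..t, ft s with hFdef
  have hFc : Continuous F := hfti.continuous_primitive 0
  set M : ℝ := ∫ s, |ft s| with hMdef
  have hM0 : 0 ≤ M := integral_nonneg fun s => abs_nonneg _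
  have hFb : ∀ t, |F t| ≤ M := by
    intro t
    have habs : Integrable (fun s => |ft s|) volume := hfti.abs
    rcases le_total 0 t with h0t | ht0
    · calc |F t| ≤ ∫ s in (0:ℝ)..t, |ft s| := by
            simpa using intervalIntegral.abs_integral_le_integral_abs h0t
        _ = ∫ s in Set.Ioc 0 t, |ft s| := intervalIntegral.integral_of_le h0t
        _ ≤ M := setIntegral_le_integral habs (Filter.Eventually.of_forall fun s => abs_nonneg _)
    · have : F t = -∫ s in t..(0:ℝ), ft s := by
        show (∫ s in (0:ℝ)..t, ft s) = -∫ s in t..(0:ℝ), ft s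
        rw [intervalIntegral.integral_symm]
      rw [this, abs_neg]
      calc |∫ s in t..(0:ℝ), ft s| ≤ ∫ s in t..(0:ℝ), |ft s| := by
            simpa using intervalIntegral.abs_integral_le_integral_abs ht0
        _ = ∫ s in Set.Ioc t 0, |ft s| := intervalIntegral.integral_of_le ht0
        _ ≤ M := setIntegral_le_integral habs (Filter.Eventually.of_forall fun s => abs_nonneg _)
  -- original primitive agrees with F on (0,1]
  have hF_eq : ∀ t ∈ Set.Ioc (0:ℝ) 1, (∫ s in (0:ℝ)..t, f s) = F t := by
    intro t ht
    have hFt : F t = ∫ s in (0:ℝ)..t, ft s := rfl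
    rw [hFt, intervalIntegral.integral_of_le ht.1.le, intervalIntegral.integral_of_le ht.1.le]
    apply setIntegral_congr_ae measurableSet_Ioc
    have h1 : ∀ᵐ s ∂(volume : Measure ℝ), s ≠ 1 := by
      rw [ae_iff]; simp
    filter_upwards [h1] with s hs1 hs
    rw [hftdef, Set.indicator_of_mem]
    exact ⟨hs.1, lt_of_le_of_ne (hs.2.trans ht.2) hs1⟩
  -- the integrand of v, truncated
  set g : ℝ → ℝ := fun t => (1 / σ t) * F t with hgdef
  have hgmeas : Measurable g := (measurable_const.div hσm).mul hFc.measurable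
  set h : ℝ → ℝ := Set.indicator (Set.Ioo (0:ℝ) 1) g with hhdef
  have hσae : ∀ᵐ t ∂(volume.restrict (Set.Ioo (0:ℝ) 1)), σ₀ ≤ σ t ∧ σ t ≤ σ₁ := by
    filter_upwards [ae_restrict_of_ae hσb, ae_restrict_mem measurableSet_Ioo] with t h1 h2
    exact h1 h2
  have hh_int : Integrable h volume := by
    rw [hhdef, integrable_indicator_iff measurableSet_Ioo]
    apply Integrable.mono' (g := fun _ => (1/σ₀) * M) (integrable_const _)
      hgmeas.aestronglyMeasurable
    filter_upwards [hσae] with t ht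
    have hσt : 0 < σ t := lt_of_lt_of_le hσ₀ ht.1
    rw [Real.norm_eq_abs, hgdef]
    calc |1 / σ t * F t| = (1 / σ t) * |F t| := by
          rw [abs_mul, abs_of_pos (by positivity)]
      _ ≤ (1/σ₀) * M :=
          mul_le_mul (by rw [div_le_div_iff₀ hσt hσ₀]; nlinarith) (hFb t) (abs_nonneg _)
            (by positivity)
  have hne1 : ∀ᵐ s ∂(volume : Measure ℝ), s ≠ 1 := by rw [ae_iff]; simp
  have hgIoc : IntegrableOn g (Set.Ioc (0:ℝ) 1) volume := by
    apply (hh_int.integrableOn (s := Set.Ioc 0 1)).congr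
    filter_upwards [ae_restrict_of_ae hne1, ae_restrict_mem measurableSet_Ioc] with t h1 h2
    rw [hhdef, Set.indicator_of_mem (Set.mem_Ioo.mpr ⟨h2.1, lt_of_le_of_ne h2.2 h1⟩)]
  -- the a.e. pointwise identity for the left-hand integrand
  have hkey : ∀ᵐ x ∂(volume : Measure ℝ), x ∈ Set.Ioo (0:ℝ) 1 →
      σ x * deriv v x * deriv w x = -F x * deriv w x := by
    filter_upwards [ae_tendsto_interval_average hh_int, hσb] with x hLeb hσx hx01
    have hσxpos : 0 < σ x := lt_of_lt_of_le hσ₀ (hσx hx01).1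
    have e : ∀ c ∈ Set.Ioo (0:ℝ) 1, v c = ∫ t in c..(1:ℝ), g t := by
      intro c hc
      rw [hv]
      apply intervalIntegral.integral_congr
      intro t ht
      rw [Set.uIcc_of_le hc.2.le] at ht
      have ht' : t ∈ Set.Ioc (0:ℝ) 1 := ⟨lt_of_lt_of_le hc.1 ht.1, ht.2⟩
      show (1 / σ t) * (∫ s in (0:ℝ)..t, f s) = (1 / σ t) * F t
      rw [hF_eq t ht']
    have hvdiff : ∀ y ∈ Set.Ioo (0:ℝ) 1, v y - v x = -∫ t in x..y, h t := by
      intro y hy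
      have hxy_int : IntervalIntegrable g volume x y := by
        rw [intervalIntegrable_iff]
        apply hgIoc.mono_set
        intro t ht
        exact ⟨lt_of_lt_of_le (lt_min hx01.1 hy.1) ht.1.le,
          ht.2.trans (max_le hx01.2.le hy.2.le)⟩
      have hy1_int : IntervalIntegrable g volume y 1 := by
        rw [intervalIntegrable_iff]
        apply hgIoc.mono_set
        intro t ht
        exact ⟨lt_of_lt_of_le (lt_min hy.1 one_pos) ht.1.le,
          ht.2.trans (max_le hy.2.le le_rfl)⟩
      have hadd : (∫ t in x..y, g t) + ∫ t in y..(1:ℝ), g t = ∫ t in x..(1:ℝ), g t :=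
        intervalIntegral.integral_add_adjacent_intervals hxy_int hy1_int
      have hgh : (∫ t in x..y, g t) = ∫ t in x..y, h t := by
        apply intervalIntegral.integral_congr
        intro t ht
        have ht' : t ∈ Set.Ioo (0:ℝ) 1 := by
          rcases Set.mem_uIcc.mp ht with ⟨h1, h2⟩ | ⟨h1, h2⟩
          · exact ⟨lt_of_lt_of_le hx01.1 h1, lt_of_le_of_lt h2 hy.2⟩
          · exact ⟨lt_of_lt_of_le hy.1 h1, lt_of_le_of_lt h2 hx01.2⟩
        exact (Set.indicator_of_mem ht' g).symm
      rw [e y hy, e x hx01, ← hadd, hgh]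
      ring
    have hslope : HasDerivAt v (-(h x)) x := by
      rw [hasDerivAt_iff_tendsto_slope]
      have hmem : Set.Ioo (0:ℝ) 1 ∈ 𝓝[≠] x := nhdsWithin_le_nhds (isOpen_Ioo.mem_nhds hx01)
      have heq : (fun y => -((∫ t in x..y, h t) / (y - x))) =ᶠ[𝓝[≠] x] slope v x := by
        filter_upwards [hmem] with y hy
        rw [slope_def_field, hvdiff y hy, neg_div]
      exact hLeb.neg.congr' heq
    rw [hslope.deriv, hhdef, Set.indicator_of_mem hx01, hgdef]
    have : σ x * -(1 / σ x * F x) = -F x := by field_simp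
    rw [this]
  -- pass to set integrals over Ioc 0 1
  haveI : IsFiniteMeasure (volume.restrict (Set.Ioc (0:ℝ) 1)) :=
    ⟨by rw [Measure.restrict_apply_univ]; exact measure_Ioc_lt_top⟩
  have hwd : ∀ x : ℝ, |deriv w x| ≤ (K:ℝ) := fun x => by
    simpa [Real.norm_eq_abs] using norm_deriv_le_of_lipschitz (𝕜 := ℝ) hwK
  rw [intervalIntegral.integral_of_le zero_le_one, intervalIntegral.integral_of_le zero_le_one]
  have step1 : ∫ x in Set.Ioc (0:ℝ) 1, σ x * deriv v x * deriv w x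
      = ∫ x in Set.Ioc (0:ℝ) 1, -F x * deriv w x := by
    apply setIntegral_congr_ae measurableSet_Ioc
    filter_upwards [hkey, hne1] with x hx h1 hmem
    exact hx ⟨hmem.1, lt_of_le_of_ne hmem.2 h1⟩
  have step2 : ∫ x in Set.Ioc (0:ℝ) 1, f x * w x = ∫ x in Set.Ioc (0:ℝ) 1, ft x * w x := by
    apply setIntegral_congr_ae measurableSet_Ioc
    filter_upwards [hne1] with x h1 hmem
    rw [hftdef, Set.indicator_of_mem (Set.mem_Ioo.mpr ⟨hmem.1, lt_of_le_of_ne hmem.2 h1⟩)]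
  rw [step1, step2]
  -- express F via an indicator kernel
  have hFrep : ∀ x ∈ Set.Ioc (0:ℝ) 1,
      F x = ∫ s in Set.Ioc (0:ℝ) 1, Set.indicator (Set.Iic x) ft s := by
    intro x hx
    rw [setIntegral_indicator measurableSet_Iic]
    have hset : Set.Ioc (0:ℝ) 1 ∩ Set.Iic x = Set.Ioc 0 x := by
      rw [Set.Ioc_inter_Iic, min_eq_right hx.2]
    rw [hset]
    exact intervalIntegral.integral_of_le hx.1.le
  have lhs_eq : ∫ x in Set.Ioc (0:ℝ) 1, -F x * deriv w x
      = ∫ x in Set.Ioc (0:ℝ) 1, ∫ s in Set.Ioc (0:ℝ) 1,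
          -(deriv w x * Set.indicator (Set.Iic x) ft s) := by
    apply setIntegral_congr_ae measurableSet_Ioc
    filter_upwards with x hx
    rw [MeasureTheory.integral_neg, MeasureTheory.integral_const_mul, ← hFrep x hx]
    ring
  rw [lhs_eq]
  -- Fubini
  have hprod : Integrable
      (Function.uncurry fun x s => -(deriv w x * Set.indicator (Set.Iic x) ft s))
      ((volume.restrict (Set.Ioc (0:ℝ) 1)).prod (volume.restrict (Set.Ioc (0:ℝ) 1))) := by
    apply Integrable.mono' (g := fun p : ℝ × ℝ => (K:ℝ) * |ft p.2|)
    · exact (integrable_const (μ := volume.restrict (Set.Ioc (0:ℝ) 1)) (K:ℝ)).mul_prod (hfti.abs.integrableOn)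
    · have h2 : (fun p : ℝ × ℝ => Set.indicator (Set.Iic p.1) ft p.2)
          = Set.indicator {q : ℝ × ℝ | q.2 ≤ q.1} (fun q => ft q.2) := by
        funext p
        by_cases hp : p.2 ≤ p.1 <;> simp [Set.indicator_apply, hp]
      have hm : Measurable
          (fun p : ℝ × ℝ => -(deriv w p.1 * Set.indicator (Set.Iic p.1) ft p.2)) := by
        apply Measurable.neg
        apply ((measurable_deriv w).comp measurable_fst).mul
        rw [h2]
        exact (hftm.comp measurable_snd).indicator (measurableSet_le measurable_snd measurable_fst)
      exact hm.aestronglyMeasurable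
    · filter_upwards with p
      simp only [Function.uncurry, Real.norm_eq_abs, abs_neg, abs_mul]
      apply mul_le_mul (hwd p.1) _ (abs_nonneg _) K.coe_nonneg
      simpa [Real.norm_eq_abs] using norm_indicator_le_norm_self ft p.2 (s := Set.Iic p.1)
  rw [MeasureTheory.integral_integral_swap hprod]
  -- compute the inner integral
  apply setIntegral_congr_ae measurableSet_Ioc
  filter_upwards with s hs
  have e1 : ∀ x : ℝ, -(deriv w x * Set.indicator (Set.Iic x) ft s)
      = -(ft s * Set.indicator (Set.Ici s) (deriv w) x) := by
    intro x
    by_cases hxs : s ≤ x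
    · rw [Set.indicator_of_mem (Set.mem_Iic.mpr hxs), Set.indicator_of_mem (Set.mem_Ici.mpr hxs)]
      ring
    · rw [Set.indicator_of_notMem (fun hc => hxs (Set.mem_Iic.mp hc)),
        Set.indicator_of_notMem (fun hc => hxs (Set.mem_Ici.mp hc))]
      ring
  simp_rw [e1]
  rw [MeasureTheory.integral_neg, MeasureTheory.integral_const_mul, setIntegral_indicator measurableSet_Ici]
  have hset2 : Set.Ioc (0:ℝ) 1 ∩ Set.Ici s = Set.Icc s 1 := by
    ext t
    simp only [Set.mem_inter_iff, Set.mem_Ioc, Set.mem_Ici, Set.mem_Icc]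
    exact ⟨fun ht => ⟨ht.2, ht.1.2⟩, fun ht => ⟨⟨lt_of_lt_of_le hs.1 ht.1, ht.2⟩, ht.1⟩⟩
  rw [hset2, integral_Icc_eq_integral_Ioc, ← intervalIntegral.integral_of_le hs.2,
    lipschitz_integral_deriv hwK hs.2, hw1]
  ring
end

section
/- Let m : ℝ → ℝ be measurable and essentially bounded on (0,1). Then the supremum of the quantities ∫_0^1 |m(x) ∫_0^x f(t) dt| dx, taken over all f : ℝ → ℝ integrable on (0,1) satisfying ∫_0^1 |∫_0^x f(t) dt| dx ≤ 1, equals the essential supremum of |m| over (0,1). -/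
open MeasureTheory intervalIntegral

lemma upper_bound_aux (m : ℝ → ℝ) (hm : Measurable m) (C : ℝ)
    (hC : ∀ᵐ x ∂volume.restrict (Set.Ioo (0:ℝ) 1), |m x| ≤ C)
    (M : ℝ) (hM0 : 0 ≤ M)
    (hMae : ∀ᵐ x ∂volume.restrict (Set.Ioo (0:ℝ) 1), |m x| ≤ M)
    (f : ℝ → ℝ) (hf_int : IntegrableOn f (Set.Ioo (0:ℝ) 1) volume)
    (hf_con : (∫ x in (0:ℝ)..1, |∫ t in (0:ℝ)..x, f t|) ≤ 1) :
    (∫ x in (0:ℝ)..1, |m x * ∫ t in (0:ℝ)..x, f t|) ≤ M := by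
  set μ := volume.restrict (Set.Ioo (0:ℝ) 1) with hμ
  set F := fun x : ℝ => ∫ t in (0:ℝ)..x, f t with hF
  have hf_Icc : IntegrableOn f (Set.Icc (0:ℝ) 1) volume :=
    hf_int.congr_set_ae Ioo_ae_eq_Icc.symm
  have hFcont : ContinuousOn F (Set.Icc 0 1) := by
    have := intervalIntegral.continuousOn_primitive_interval
      (a := (0:ℝ)) (b := (1:ℝ)) (μ := volume) (f := f)
      (by rw [Set.uIcc_of_le (by norm_num : (0:ℝ) ≤ 1)]; exact hf_Icc)
    rwa [Set.uIcc_of_le (by norm_num : (0:ℝ) ≤ 1)] at this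
  have hFmeas : AEStronglyMeasurable F μ :=
    (hFcont.mono Set.Ioo_subset_Icc_self).aestronglyMeasurable measurableSet_Ioo
  obtain ⟨B, hB⟩ : ∃ B, ∀ x ∈ Set.Icc (0:ℝ) 1, ‖F x‖ ≤ B :=
    isCompact_Icc.exists_bound_of_continuousOn hFcont
  have haemem : ∀ᵐ x ∂μ, x ∈ Set.Ioo (0:ℝ) 1 := ae_restrict_mem measurableSet_Ioo
  have hFint : Integrable F μ := by
    refine Integrable.mono' (integrable_const B) hFmeas ?_
    filter_upwards [haemem] with x hx
    exact hB x (Set.Ioo_subset_Icc_self hx)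
  have hintM : Integrable (fun x => M * |F x|) μ := (hFint.abs.const_mul M)
  have hintmF : Integrable (fun x => |m x * F x|) μ := by
    refine Integrable.mono' hintM
      ((hm.aestronglyMeasurable.mul hFmeas).norm.congr ?_) ?_
    · filter_upwards with x using (Real.norm_eq_abs _)
    · filter_upwards [hMae] with x hx
      rw [Real.norm_eq_abs, abs_abs, abs_mul]
      exact mul_le_mul_of_nonneg_right hx (abs_nonneg _)
  have hconv : ∀ g : ℝ → ℝ, (∫ x in (0:ℝ)..1, g x) = ∫ x, g x ∂μ := by
    intro g
    rw [intervalIntegral.integral_of_le (by norm_num : (0:ℝ) ≤ 1)]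
    exact (setIntegral_congr_set (μ := volume) (f := g) Ioo_ae_eq_Ioc).symm
  rw [hconv]
  calc ∫ x, |m x * F x| ∂μ ≤ ∫ x, M * |F x| ∂μ := by
        refine integral_mono_ae hintmF hintM ?_
        filter_upwards [hMae] with x hx
        rw [abs_mul]
        exact mul_le_mul_of_nonneg_right hx (abs_nonneg _)
    _ = M * ∫ x, |F x| ∂μ := integral_const_mul M _
    _ ≤ M * 1 := by
        refine mul_le_mul_of_nonneg_left ?_ hM0
        rw [← hconv fun x => |F x|] at *
        exact hf_con
    _ = M := mul_one M


lemma indIntegral {x c d : ℝ} (hx : 0 ≤ x) (hc : 0 ≤ c) (hcd : c ≤ d) :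
    ∫ t in (0:ℝ)..x, (Set.Ioc c d).indicator (fun _ => (1:ℝ)) t = min x d - min x c := by
  rw [intervalIntegral.integral_of_le hx, MeasureTheory.integral_indicator measurableSet_Ioc,
    MeasureTheory.Measure.restrict_restrict measurableSet_Ioc,
    MeasureTheory.setIntegral_const, smul_eq_mul, mul_one]
  have h1 : Set.Ioc c d ∩ Set.Ioc 0 x = Set.Ioc c (min x d) := by
    rw [Set.Ioc_inter_Ioc, max_eq_left hc, min_comm]
  rw [h1, measureReal_def, Real.volume_Ioc]
  rcases le_total x c with h | h
  · have hxd : min x d = x := min_eq_left (h.trans hcd)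
    have hxc : min x c = x := min_eq_left h
    rw [hxd, hxc, sub_self, ENNReal.ofReal_of_nonpos (by linarith)]
    simp
  · have hxc : min x c = c := min_eq_right h
    rw [hxc, ENNReal.toReal_ofReal (by simp only [sub_nonneg, le_min_iff]; exact ⟨h, hcd⟩)]

lemma minIntegrable (c : ℝ) : IntervalIntegrable (fun x => min x c) volume 0 1 :=
  ((continuous_id.min continuous_const)).intervalIntegrable 0 1

lemma minIntegral {c : ℝ} (h0 : 0 ≤ c) (h1 : c ≤ 1) :
    ∫ x in (0:ℝ)..1, min x c = c - c^2/2 := by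
  rw [← intervalIntegral.integral_add_adjacent_intervals
    ((minIntegrable c).mono_set (by rw [Set.uIcc_of_le h0, Set.uIcc_of_le (by norm_num)]; exact Set.Icc_subset_Icc le_rfl h1))
    ((minIntegrable c).mono_set (by rw [Set.uIcc_of_le h1, Set.uIcc_of_le (by norm_num)]; exact Set.Icc_subset_Icc h0 le_rfl))]
  have e1 : ∫ x in (0:ℝ)..c, min x c = ∫ x in (0:ℝ)..c, x := by
    apply intervalIntegral.integral_congr
    intro x hx
    rw [Set.uIcc_of_le h0] at hx
    exact min_eq_left hx.2
  have e2 : ∫ x in c..(1:ℝ), min x c = ∫ x in c..(1:ℝ), c := by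
    apply intervalIntegral.integral_congr
    intro x hx
    rw [Set.uIcc_of_le h1] at hx
    exact min_eq_right hx.1
  rw [e1, e2, integral_id, intervalIntegral.integral_const]
  rw [smul_eq_mul]; ring

lemma tent_bounds {a δ x : ℝ} (hδ : 0 ≤ δ) :
    0 ≤ 2*min x a - min x (a-δ) - min x (a+δ) ∧
    2*min x a - min x (a-δ) - min x (a+δ) ≤ δ := by
  simp only [min_def]; split_ifs <;> constructor <;> linarith

lemma tent_zero {a δ x : ℝ} (hδ : 0 ≤ δ) (h : x ≤ a - δ ∨ a + δ ≤ x) :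
    2*min x a - min x (a-δ) - min x (a+δ) = 0 := by
  rcases h with h | h
  · rw [min_eq_left (by linarith), min_eq_left h, min_eq_left (by linarith)]; ring
  · rw [min_eq_right (by linarith), min_eq_right (by linarith), min_eq_right h]; ring

lemma lower_bound_aux (m : ℝ → ℝ) (hm : Measurable m) (M ε : ℝ)
    (hMae : ∀ᵐ x ∂volume.restrict (Set.Ioo (0:ℝ) 1), |m x| ≤ M)
    (hε : 0 < ε) (hεM : ε ≤ M)
    (hA_pos : 0 < volume (Set.Ioo (0:ℝ) 1 ∩ {x | M - ε/2 < |m x|})) :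
    ∃ f : ℝ → ℝ, IntegrableOn f (Set.Ioo (0:ℝ) 1) volume ∧
      (∫ x in (0:ℝ)..1, |∫ t in (0:ℝ)..x, f t|) ≤ 1 ∧
      M - ε < ∫ x in (0:ℝ)..1, |m x * ∫ t in (0:ℝ)..x, f t| := by
  have hM0 : 0 < M := lt_of_lt_of_le hε hεM

  set A := Set.Ioo (0:ℝ) 1 ∩ {x | M - ε/2 < |m x|} with hA
  have hA_meas : MeasurableSet A :=
    measurableSet_Ioo.inter (measurableSet_lt measurable_const hm.abs)
  have hA_sub : A ⊆ Set.Ioo (0:ℝ) 1 := Set.inter_subset_left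
  -- density point
  haveI : (ae (volume.restrict A)).NeBot :=
    ae_neBot.mpr (fun h0 => hA_pos.ne' (Measure.restrict_eq_zero.mp h0))
  obtain ⟨a, hden, haA⟩ :=
    ((Besicovitch.ae_tendsto_measure_inter_div volume A).and
      (ae_restrict_mem hA_meas)).exists
  obtain ⟨⟨ha1, ha2⟩, ham⟩ := haA
  -- choose η and δ
  set η := ε/(8*M) with hη
  have hη0 : 0 < η := by positivity
  have hη8 : η ≤ 1/8 := by
    rw [hη, div_le_div_iff₀ (by positivity) (by norm_num)]
    nlinarith
  have hlt1 : (1:ENNReal) - ENNReal.ofReal η < 1 :=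
    ENNReal.sub_lt_self ENNReal.one_ne_top one_ne_zero (ENNReal.ofReal_pos.2 hη0).ne'
  have h1 : ∀ᶠ r in nhdsWithin (0:ℝ) (Set.Ioi 0),
      1 - ENNReal.ofReal η <
        volume (A ∩ Metric.closedBall a r) / volume (Metric.closedBall a r) :=
    hden.eventually (eventually_gt_nhds hlt1)
  have h2 : Set.Ioo (0:ℝ) (min a (1-a)) ∈ nhdsWithin (0:ℝ) (Set.Ioi 0) :=
    Ioo_mem_nhdsGT_of_mem ⟨le_rfl, lt_min ha1 (by linarith)⟩
  obtain ⟨δ, hδr, hδmem⟩ := (h1.and h2).exists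
  obtain ⟨hδ0, hδm⟩ := hδmem
  have hδa : δ < a := lt_of_lt_of_le hδm (min_le_left _ _)
  have hδb : a + δ < 1 := by have := lt_of_lt_of_le hδm (min_le_right _ _); linarith
  have hc1 : 0 < a - δ := by linarith
  -- volume estimate : volume (ball \ A) small
  have hball : volume (Metric.closedBall a δ) = ENNReal.ofReal (2*δ) :=
    Real.volume_closedBall a δ
  have hcap : ENNReal.ofReal ((1-η)*(2*δ)) ≤ volume (A ∩ Metric.closedBall a δ) := by
    have hb0 : volume (Metric.closedBall a δ) ≠ 0 := by
      rw [hball]; exact (ENNReal.ofReal_pos.2 (by linarith)).ne'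
    have hbt : volume (Metric.closedBall a δ) ≠ ⊤ := by rw [hball]; exact ENNReal.ofReal_ne_top
    have := (ENNReal.lt_div_iff_mul_lt (Or.inl hb0) (Or.inl hbt)).1 hδr
    rw [hball] at this
    calc ENNReal.ofReal ((1-η)*(2*δ))
        = ENNReal.ofReal (1-η) * ENNReal.ofReal (2*δ) :=
          ENNReal.ofReal_mul (by linarith)
      _ = (1 - ENNReal.ofReal η) * ENNReal.ofReal (2*δ) := by
          rw [← ENNReal.ofReal_one, ← ENNReal.ofReal_sub _ hη0.le]
      _ ≤ volume (A ∩ Metric.closedBall a δ) := this.le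
  have hdiffsub : volume (Metric.closedBall a δ \ A) ≤ ENNReal.ofReal (η*(2*δ)) := by
    have hfin : volume (A ∩ Metric.closedBall a δ) ≠ ⊤ :=
      (lt_of_le_of_lt (measure_mono Set.inter_subset_right) (by rw [hball]; exact ENNReal.ofReal_lt_top)).ne
    have hdiff : volume (Metric.closedBall a δ \ A)
        = volume (Metric.closedBall a δ) - volume (A ∩ Metric.closedBall a δ) := by
      rw [show Metric.closedBall a δ \ A = Metric.closedBall a δ \ (A ∩ Metric.closedBall a δ) by
            rw [Set.diff_inter_self_eq_diff],
        measure_diff Set.inter_subset_right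
          ((hA_meas.inter measurableSet_closedBall).nullMeasurableSet) hfin]
    rw [hdiff, tsub_le_iff_right, hball]
    calc ENNReal.ofReal (2*δ) = ENNReal.ofReal (η*(2*δ)) + ENNReal.ofReal ((1-η)*(2*δ)) := by
          rw [← ENNReal.ofReal_add (by positivity) (by nlinarith)]
          ring_nf
      _ ≤ ENNReal.ofReal (η*(2*δ)) + volume (A ∩ Metric.closedBall a δ) := by
          exact add_le_add le_rfl hcap
  have hsmall : (volume (Metric.closedBall a δ \ A)).toReal ≤ η*(2*δ) :=
    ENNReal.toReal_le_of_le_ofReal (by positivity) hdiffsub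
  -- the tent function
  have hδne : δ ≠ 0 := hδ0.ne'
  set f : ℝ → ℝ := fun t => δ⁻¹*δ⁻¹*((Set.Ioc (a-δ) a).indicator (fun _ => (1:ℝ)) t
      - (Set.Ioc a (a+δ)).indicator (fun _ => (1:ℝ)) t) with hf
  set G : ℝ → ℝ := fun x => δ⁻¹*δ⁻¹*(2*min x a - min x (a-δ) - min x (a+δ)) with hG
  have hind1 : Integrable ((Set.Ioc (a-δ) a).indicator (fun _ => (1:ℝ))) volume := by
    rw [integrable_indicator_iff measurableSet_Ioc]
    exact integrableOn_const (by rw [Real.volume_Ioc]; exact ENNReal.ofReal_ne_top)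
  have hind2 : Integrable ((Set.Ioc a (a+δ)).indicator (fun _ => (1:ℝ))) volume := by
    rw [integrable_indicator_iff measurableSet_Ioc]
    exact integrableOn_const (by rw [Real.volume_Ioc]; exact ENNReal.ofReal_ne_top)
  have hf_glob : Integrable f volume := ((hind1.sub hind2).const_mul _)
  have hFG : ∀ x : ℝ, 0 ≤ x → (∫ t in (0:ℝ)..x, f t) = G x := by
    intro x hx
    rw [hf]
    simp only
    rw [intervalIntegral.integral_const_mul,
      intervalIntegral.integral_sub (hind1.intervalIntegrable) (hind2.intervalIntegrable),
      indIntegral hx (by linarith : (0:ℝ) ≤ a - δ) (by linarith : a - δ ≤ a),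
      indIntegral hx (by linarith : (0:ℝ) ≤ a) (by linarith : a ≤ a + δ), hG]
    ring
  have hGcont : Continuous G := by
    apply continuous_const.mul
    exact ((continuous_const.mul (continuous_id.min continuous_const)).sub
      (continuous_id.min continuous_const)).sub (continuous_id.min continuous_const)
  have hG0 : ∀ x, 0 ≤ G x := fun x =>
    mul_nonneg (by positivity) (tent_bounds hδ0.le).1
  have hGδ : ∀ x, G x ≤ δ⁻¹ := by
    intro x
    calc G x ≤ δ⁻¹*δ⁻¹*δ :=
          mul_le_mul_of_nonneg_left (tent_bounds hδ0.le).2 (by positivity)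
      _ = δ⁻¹ := by field_simp
  have hGzero : ∀ x, x ∉ Metric.closedBall a δ → G x = 0 := by
    intro x hx
    rw [Metric.mem_closedBall, Real.dist_eq, abs_le, not_and_or] at hx
    rw [hG]
    simp only
    rw [tent_zero hδ0.le (by rcases hx with h | h <;> [left; right] <;> push_neg at h <;> linarith)]
    ring
  have hGint1 : ∫ x in (0:ℝ)..1, G x = 1 := by
    rw [hG]
    simp only
    rw [intervalIntegral.integral_const_mul]
    rw [intervalIntegral.integral_sub
        (((minIntegrable a).const_mul 2).sub (minIntegrable (a-δ))) (minIntegrable (a+δ)),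
      intervalIntegral.integral_sub ((minIntegrable a).const_mul 2) (minIntegrable (a-δ)),
      intervalIntegral.integral_const_mul,
      minIntegral ha1.le ha2.le,
      minIntegral (by linarith) (by linarith),
      minIntegral (by linarith) (by linarith)]
    field_simp
    ring
  -- conversion interval ↔ set integral over Ioo
  have hconv : ∀ g : ℝ → ℝ, (∫ x in (0:ℝ)..1, g x) = ∫ x in Set.Ioo (0:ℝ) 1, g x := by
    intro g
    rw [intervalIntegral.integral_of_le (by norm_num : (0:ℝ) ≤ 1)]
    exact (setIntegral_congr_set (μ := volume) (f := g) Ioo_ae_eq_Ioc).symm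
  refine ⟨f, hf_glob.integrableOn, ?_, ?_⟩
  · have e : (∫ x in (0:ℝ)..1, |∫ t in (0:ℝ)..x, f t|) = ∫ x in (0:ℝ)..1, G x := by
      apply intervalIntegral.integral_congr
      intro x hx
      rw [Set.uIcc_of_le (by norm_num : (0:ℝ) ≤ 1)] at hx
      show |∫ t in (0:ℝ)..x, f t| = G x
      rw [hFG x hx.1, abs_of_nonneg (hG0 x)]
    rw [e, hGint1]
  · have hmain : (∫ x in (0:ℝ)..1, |m x * ∫ t in (0:ℝ)..x, f t|)
        = ∫ x in Set.Ioo (0:ℝ) 1, |m x| * G x := by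
      have e : (∫ x in (0:ℝ)..1, |m x * ∫ t in (0:ℝ)..x, f t|)
          = ∫ x in (0:ℝ)..1, |m x| * G x := by
        apply intervalIntegral.integral_congr
        intro x hx
        rw [Set.uIcc_of_le (by norm_num : (0:ℝ) ≤ 1)] at hx
        show |m x * ∫ t in (0:ℝ)..x, f t| = |m x| * G x
        rw [hFG x hx.1, abs_mul, abs_of_nonneg (hG0 x)]
      rw [e, hconv]
    rw [hmain]
    have hmG_meas : AEStronglyMeasurable (fun x => |m x| * G x)
        (volume.restrict (Set.Ioo (0:ℝ) 1)) :=
      (hm.abs.aestronglyMeasurable.mul hGcont.aestronglyMeasurable)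
    have hmG_int : IntegrableOn (fun x => |m x| * G x) (Set.Ioo (0:ℝ) 1) volume := by
      refine Integrable.mono' (integrable_const (M * δ⁻¹)) hmG_meas ?_
      filter_upwards [hMae] with x hx
      rw [Real.norm_eq_abs, abs_of_nonneg (mul_nonneg (abs_nonneg _) (hG0 x))]
      exact mul_le_mul hx (hGδ x) (hG0 x) hM0.le
    have hG_Ioo : IntegrableOn G (Set.Ioo (0:ℝ) 1) volume :=
      (hGcont.continuousOn.integrableOn_compact isCompact_Icc).mono_set Set.Ioo_subset_Icc_self
    have s1 : ∫ x in A, |m x| * G x ≤ ∫ x in Set.Ioo (0:ℝ) 1, |m x| * G x := by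
      refine setIntegral_mono_set hmG_int ?_ (HasSubset.Subset.eventuallyLE hA_sub)
      exact Filter.Eventually.of_forall fun x => mul_nonneg (abs_nonneg _) (hG0 x)
    have s2 : (M - ε/2) * ∫ x in A, G x ≤ ∫ x in A, |m x| * G x := by
      rw [← MeasureTheory.integral_const_mul]
      refine setIntegral_mono_on ((hG_Ioo.mono_set hA_sub).const_mul _)
        (hmG_int.mono_set hA_sub) hA_meas ?_
      intro x hx
      exact mul_le_mul_of_nonneg_right (le_of_lt hx.2) (hG0 x)
    have hIoo_G : ∫ x in Set.Ioo (0:ℝ) 1, G x = 1 := by rw [← hconv]; exact hGint1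
    have hdiff_le : ∫ x in Set.Ioo (0:ℝ) 1 \ A, G x ≤ 2*η := by
      have hind_int : Integrable
          (fun x => δ⁻¹ * (Metric.closedBall a δ).indicator (fun _ => (1:ℝ)) x)
          (volume.restrict (Set.Ioo (0:ℝ) 1 \ A)) := by
        refine Integrable.const_mul ?_ _
        refine Integrable.integrableOn ?_
        rw [integrable_indicator_iff measurableSet_closedBall]
        exact integrableOn_const (by rw [Real.volume_closedBall]; exact ENNReal.ofReal_ne_top)
      have step : ∫ x in Set.Ioo (0:ℝ) 1 \ A, G x
          ≤ ∫ x in Set.Ioo (0:ℝ) 1 \ A,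
              δ⁻¹ * (Metric.closedBall a δ).indicator (fun _ => (1:ℝ)) x := by
        refine setIntegral_mono_on (hG_Ioo.mono_set Set.diff_subset) hind_int
          (measurableSet_Ioo.diff hA_meas) ?_
        intro x _
        by_cases hxb : x ∈ Metric.closedBall a δ
        · rw [Set.indicator_of_mem hxb, mul_one]; exact hGδ x
        · rw [Set.indicator_of_notMem hxb, hGzero x hxb, mul_zero]
      refine step.trans ?_
      rw [MeasureTheory.integral_const_mul, MeasureTheory.integral_indicator measurableSet_closedBall,
        setIntegral_const, smul_eq_mul, mul_one, measureReal_def, Measure.restrict_apply measurableSet_closedBall]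
      have hsub2 : Metric.closedBall a δ ∩ (Set.Ioo (0:ℝ) 1 \ A) ⊆ Metric.closedBall a δ \ A :=
        fun x hx => ⟨hx.1, hx.2.2⟩
      have hfin2 : volume (Metric.closedBall a δ \ A) ≠ ⊤ :=
        (lt_of_le_of_lt (measure_mono Set.diff_subset)
          (by rw [Real.volume_closedBall]; exact ENNReal.ofReal_lt_top)).ne
      have : (volume (Metric.closedBall a δ ∩ (Set.Ioo (0:ℝ) 1 \ A))).toReal
          ≤ (volume (Metric.closedBall a δ \ A)).toReal :=
        ENNReal.toReal_mono hfin2 (measure_mono hsub2)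
      calc δ⁻¹ * (volume (Metric.closedBall a δ ∩ (Set.Ioo (0:ℝ) 1 \ A))).toReal
          ≤ δ⁻¹ * (η*(2*δ)) := by
            refine mul_le_mul_of_nonneg_left (this.trans hsmall) (by positivity)
        _ = 2*η := by field_simp
    have sA : 1 - 2*η ≤ ∫ x in A, G x := by
      have hsplit := integral_diff hA_meas hG_Ioo hA_sub (f := G) (μ := volume)
      linarith
    have h2ηM : 2*η*M = ε/4 := by rw [hη]; field_simp; ring
    calc M - ε < (M - ε/2) * (1 - 2*η) := by nlinarith [mul_pos hε hη0]
      _ ≤ (M - ε/2) * ∫ x in A, G x :=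
          mul_le_mul_of_nonneg_left sA (by linarith)
      _ ≤ ∫ x in A, |m x| * G x := s2
      _ ≤ ∫ x in Set.Ioo (0:ℝ) 1, |m x| * G x := s1


/-- Lemma 6.1: the norm of the operator `T_m f(x) = m(x) ∫_0^x f(t) dt` from
`W^{−1,1}(0,1)` to `L¹(0,1)` equals `‖m‖_{L^∞(0,1)}`: the supremum of
`∫_0^1 |m(x) ∫_0^x f| dx` over integrable `f` with `∫_0^1 |∫_0^x f| dx ≤ 1` is
`esssup_{(0,1)} |m|`. -/
theorem multiplier_operator_norm_eq
    (m : ℝ → ℝ) (hm : Measurable m)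
    (hmb : ∃ C : ℝ, ∀ᵐ x ∂volume.restrict (Set.Ioo (0:ℝ) 1), |m x| ≤ C) :
    sSup {r : ℝ | ∃ f : ℝ → ℝ, IntegrableOn f (Set.Ioo (0:ℝ) 1) volume ∧
        (∫ x in (0:ℝ)..1, |∫ t in (0:ℝ)..x, f t|) ≤ 1 ∧
        r = ∫ x in (0:ℝ)..1, |m x * ∫ t in (0:ℝ)..x, f t|} =
      essSup (fun x => |m x|) (volume.restrict (Set.Ioo (0:ℝ) 1)) := by
  set μ := volume.restrict (Set.Ioo (0:ℝ) 1) with hμ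
  set S := {r : ℝ | ∃ f : ℝ → ℝ, IntegrableOn f (Set.Ioo (0:ℝ) 1) volume ∧
        (∫ x in (0:ℝ)..1, |∫ t in (0:ℝ)..x, f t|) ≤ 1 ∧
        r = ∫ x in (0:ℝ)..1, |m x * ∫ t in (0:ℝ)..x, f t|} with hS
  obtain ⟨C, hC⟩ := hmb
  haveI hne : (ae μ).NeBot := by
    rw [ae_neBot]
    intro h
    have := congrArg (fun ν : Measure ℝ => ν Set.univ) h
    simp [hμ, Measure.restrict_apply, Real.volume_Ioo] at this
  set M := essSup (fun x => |m x|) μ with hM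
  have hbdd : Filter.IsBoundedUnder (· ≤ ·) (ae μ) (fun x => |m x|) := ⟨C, hC⟩
  have hMae : ∀ᵐ x ∂μ, |m x| ≤ M := ae_le_essSup hbdd
  have hM0 : 0 ≤ M := by
    obtain ⟨x, hx⟩ := hMae.exists
    exact (abs_nonneg _).trans hx
  have h0S : (0:ℝ) ∈ S := by
    refine ⟨0, integrableOn_zero, ?_, ?_⟩
    · simp
    · simp
  have hub : ∀ r ∈ S, r ≤ M := by
    rintro r ⟨f, hf_int, hf_con, rfl⟩
    exact upper_bound_aux m hm C hC M hM0 hMae f hf_int hf_con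
  have hlb : ∀ ε : ℝ, 0 < ε → ∃ r ∈ S, M - ε < r := by
    intro ε hε
    rcases lt_or_ge M ε with hMε | hεM
    · exact ⟨0, h0S, by linarith⟩
    · have hA_pos : 0 < volume (Set.Ioo (0:ℝ) 1 ∩ {x | M - ε/2 < |m x|}) := by
        by_contra hcon
        push_neg at hcon
        have hA0 : volume (Set.Ioo (0:ℝ) 1 ∩ {x | M - ε/2 < |m x|}) = 0 :=
          le_antisymm hcon (zero_le)
        have hae : ∀ᵐ x ∂μ, |m x| ≤ M - ε/2 := by
          rw [ae_iff, hμ, Measure.restrict_apply' measurableSet_Ioo]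
          have e : {x : ℝ | ¬ |m x| ≤ M - ε/2} ∩ Set.Ioo 0 1
              = Set.Ioo (0:ℝ) 1 ∩ {x | M - ε/2 < |m x|} := by
            ext x
            simp only [Set.mem_inter_iff, Set.mem_setOf_eq, not_le, Set.mem_Ioo, and_comm]
          rw [e, hA0]
        have hcb : Filter.IsCoboundedUnder (· ≤ ·) (ae μ) (fun x => |m x|) :=
          Filter.isCoboundedUnder_le_of_le (ae μ) (x := 0) (fun i => abs_nonneg _)
        have : M ≤ M - ε/2 := Filter.limsup_le_of_le hcb hae
        linarith
      obtain ⟨f, h1, h2, h3⟩ := lower_bound_aux m hm M ε hMae hε hεM hA_pos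
      exact ⟨_, ⟨f, h1, h2, rfl⟩, h3⟩
  apply le_antisymm
  · exact csSup_le ⟨0, h0S⟩ hub
  · refine le_of_forall_pos_le_add fun ε hε => ?_
    obtain ⟨r, hrS, hr⟩ := hlb ε hε
    have : r ≤ sSup S := le_csSup ⟨M, fun x hx => hub x hx⟩ hrS
    linarith
end

section
/- Let N ≥ 1, let 0 < σ₀ ≤ σ₁, let τ and σ₁̂, …, σ_N̂ : ℝ → ℝ be measurable functions bounded below by σ₀ and above by σ₁ almost everywhere on (0,1), and let a₁, …, a_N ∈ ℝ. Then the supremum of ∫_0^1 |(Σ_{i=1}^N a_i/σᵢ̂(x) − 1/τ(x)) · ∫_0^x f(t) dt| dx, taken over all f : ℝ → ℝ integrable on (0,1) with ∫_0^1 |∫_0^x f(t) dt| dx ≤ 1, equals esssup_{(0,1)} |Σ_{i=1}^N a_i/σᵢ̂ − 1/τ|. -/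
open MeasureTheory intervalIntegral

/-- Integral of `min b ·` over `[0,1]`. -/
lemma aux_min_integral (b : ℝ) (hb0 : 0 ≤ b) (hb1 : b ≤ 1) :
    ∫ x in (0:ℝ)..1, min b x = b - b^2/2 := by
  have hc : Continuous (fun x : ℝ => min b x) := continuous_const.min continuous_id
  have h1 : ∫ x in (0:ℝ)..b, min b x = b^2/2 := by
    rw [intervalIntegral.integral_congr (g := fun x => x) ?_, integral_id]
    · ring
    · intro x hx
      rw [Set.uIcc_of_le hb0] at hx
      exact min_eq_right hx.2
  have h2 : ∫ x in b..1, min b x = b * (1 - b) := by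
    rw [intervalIntegral.integral_congr (g := fun _ => b) ?_, intervalIntegral.integral_const]
    · simp [smul_eq_mul]; ring
    · intro x hx
      rw [Set.uIcc_of_le hb1] at hx
      exact min_eq_left hx.1
  have := intervalIntegral.integral_add_adjacent_intervals
    (hc.intervalIntegrable (μ := volume) 0 b) (hc.intervalIntegrable b 1)
  rw [h1, h2] at this
  rw [← this]; ring

lemma aux_tent (x₀ h x : ℝ) (hh : 0 ≤ h) :
    0 ≤ 2 * min x₀ x - min (x₀-h) x - min (x₀+h) x ∧
    2 * min x₀ x - min (x₀-h) x - min (x₀+h) x ≤ h := by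
  rcases le_total x (x₀-h) with h1 | h1 <;> rcases le_total x x₀ with h2 | h2 <;>
    rcases le_total x (x₀+h) with h3 | h3 <;>
    simp [min_def] <;> split_ifs <;> constructor <;> linarith

/-- Primitive of an indicator of `Ioc a b`. -/
lemma aux_ind_integral (a b x : ℝ) (ha : 0 ≤ a) (hab : a ≤ b) (hx : 0 ≤ x) :
    ∫ t in (0:ℝ)..x, Set.indicator (Set.Ioc a b) (fun _ => (1:ℝ)) t = min b x - min a x := by
  rw [intervalIntegral.integral_of_le hx,
    MeasureTheory.setIntegral_indicator measurableSet_Ioc,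
    Set.Ioc_inter_Ioc, MeasureTheory.setIntegral_const, measureReal_def, Real.volume_Ioc, smul_eq_mul, mul_one,
    ENNReal.toReal_ofReal']
  rcases le_total x a with h1 | h1 <;> rcases le_total x b with h2 | h2 <;>
    simp [min_def, max_def] <;> split_ifs <;> linarith

/-- The `‖·‖_*`-norm of `R_τ − Σ aᵢ R_{σ̂ᵢ}`: the supremum of
`∫_0^1 |(Σ aᵢ/σ̂ᵢ(x) − 1/τ(x)) ∫_0^x f| dx` over integrable `f` with
`∫_0^1 |∫_0^x f| dx ≤ 1` equals `esssup_{(0,1)} |Σ aᵢ/σ̂ᵢ − 1/τ|`. -/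
theorem resolvent_combination_norm_eq
    (N : ℕ) (hN : 1 ≤ N)
    (σ₀ σ₁ : ℝ) (hσ₀ : 0 < σ₀) (hσ₀₁ : σ₀ ≤ σ₁)
    (τ : ℝ → ℝ) (hτm : Measurable τ)
    (hτb : ∀ᵐ x ∂volume, x ∈ Set.Ioo (0:ℝ) 1 → σ₀ ≤ τ x ∧ τ x ≤ σ₁)
    (σh : Fin N → ℝ → ℝ) (hσhm : ∀ i, Measurable (σh i))
    (hσhb : ∀ i, ∀ᵐ x ∂volume, x ∈ Set.Ioo (0:ℝ) 1 → σ₀ ≤ σh i x ∧ σh i x ≤ σ₁)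
    (a : Fin N → ℝ) :
    sSup {r : ℝ | ∃ f : ℝ → ℝ, IntegrableOn f (Set.Ioo (0:ℝ) 1) volume ∧
        (∫ x in (0:ℝ)..1, |∫ t in (0:ℝ)..x, f t|) ≤ 1 ∧
        r = ∫ x in (0:ℝ)..1,
          |((∑ i : Fin N, a i / σh i x) - 1 / τ x) * ∫ t in (0:ℝ)..x, f t|} =
      essSup (fun x => |(∑ i : Fin N, a i / σh i x) - 1 / τ x|)
        (volume.restrict (Set.Ioo (0:ℝ) 1)) := by
  classical
  set g' : ℝ → ℝ := fun x => (∑ i : Fin N, a i / σh i x) - 1 / τ x with hg'def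
  set g : ℝ → ℝ := fun x => |g' x| with hgdef
  set μ' : Measure ℝ := volume.restrict (Set.Ioo (0:ℝ) 1) with hμ'def
  set P : Set ℝ := {r : ℝ | ∃ f : ℝ → ℝ, IntegrableOn f (Set.Ioo (0:ℝ) 1) volume ∧
        (∫ x in (0:ℝ)..1, |∫ t in (0:ℝ)..x, f t|) ≤ 1 ∧
        r = ∫ x in (0:ℝ)..1, |g' x * ∫ t in (0:ℝ)..x, f t|} with hPdef
  set S : ℝ := essSup g μ' with hSdef
  -- measurability
  have hg'm : Measurable g' := by
    apply Measurable.sub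
    · exact Finset.measurable_sum _ (fun i _ => measurable_const.div (hσhm i))
    · exact measurable_const.div hτm
  have hgm : Measurable g := hg'm.abs
  set M : ℝ := (∑ i : Fin N, |a i|) / σ₀ + 1 / σ₀ with hMdef
  have hMpos : 0 < M := by
    have : 0 ≤ (∑ i : Fin N, |a i|) / σ₀ :=
      div_nonneg (Finset.sum_nonneg fun i _ => abs_nonneg _) hσ₀.le
    have h2 : 0 < 1 / σ₀ := by positivity
    rw [hMdef]; linarith
  have hM : ∀ᵐ x ∂volume, x ∈ Set.Ioo (0:ℝ) 1 → g x ≤ M := by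
    filter_upwards [hτb, ae_all_iff.2 hσhb] with x h1 h2 hx
    have hτx := h1 hx
    have hτpos : 0 < τ x := lt_of_lt_of_le hσ₀ hτx.1
    calc g x ≤ |∑ i : Fin N, a i / σh i x| + |1 / τ x| := abs_sub _ _
      _ ≤ (∑ i : Fin N, |a i| / σ₀) + 1 / σ₀ := by
          gcongr
          · calc |∑ i : Fin N, a i / σh i x| ≤ ∑ i : Fin N, |a i / σh i x| :=
                Finset.abs_sum_le_sum_abs _ _
              _ ≤ ∑ i : Fin N, |a i| / σ₀ := by
                apply Finset.sum_le_sum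
                intro i _
                have hσx := h2 i hx
                have hσpos : 0 < σh i x := lt_of_lt_of_le hσ₀ hσx.1
                rw [abs_div, abs_of_pos hσpos]
                exact div_le_div_of_nonneg_left (abs_nonneg _) hσ₀ hσx.1
          · rw [abs_of_pos (by positivity)]
            exact one_div_le_one_div_of_le hσ₀ hτx.1
      _ = M := by rw [hMdef, Finset.sum_div]
  have hM' : ∀ᵐ x ∂μ', g x ≤ M := (ae_restrict_iff' measurableSet_Ioo).2 hM
  have hBddg : Filter.IsBoundedUnder (· ≤ ·) (ae μ') g := ⟨M, Filter.eventually_map.2 hM'⟩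
  have haeS : ∀ᵐ x ∂μ', g x ≤ S := ae_le_essSup hBddg
  have hμ'Ioc : μ' = volume.restrict (Set.Ioc (0:ℝ) 1) :=
    Measure.restrict_congr_set Ioo_ae_eq_Ioc
  have hAlb : ∀ b ∈ {a : ℝ | μ' {x | a < g x} = 0}, 0 ≤ b := by
    intro b hb
    by_contra hbneg
    push_neg at hbneg
    have : {x : ℝ | b < g x} = Set.univ := by
      ext x; simp only [Set.mem_setOf_eq, Set.mem_univ, iff_true]
      exact lt_of_lt_of_le hbneg (abs_nonneg _)
    rw [Set.mem_setOf_eq, this] at hb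
    rw [hμ'def, Measure.restrict_apply_univ, Real.volume_Ioo] at hb
    simp at hb
  have hS0 : 0 ≤ S := by
    rw [hSdef, essSup_eq_sInf]
    exact Real.sInf_nonneg hAlb
  -- upper bound
  have hub : ∀ r ∈ P, r ≤ S := by
    rintro r ⟨f, hf, hf1, rfl⟩
    set F : ℝ → ℝ := fun x => ∫ t in (0:ℝ)..x, f t with hFdef
    have hfIcc : IntegrableOn f (Set.Icc (0:ℝ) 1) volume :=
      (integrableOn_Icc_iff_integrableOn_Ioo (f := f)).mpr hf
    have hFc : ContinuousOn F (Set.Icc 0 1) := by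
      have h01 : (0:ℝ) ≤ 1 := by norm_num
      have := intervalIntegral.continuousOn_primitive_interval
        (a := 0) (b := 1) (μ := volume) (f := f) (by rwa [Set.uIcc_of_le h01])
      rwa [Set.uIcc_of_le h01] at this
    have hFi : IntegrableOn F (Set.Ioc 0 1) volume :=
      (hFc.integrableOn_Icc).mono_set Set.Ioc_subset_Icc_self
    have hFaesm : AEStronglyMeasurable F (volume.restrict (Set.Ioc (0:ℝ) 1)) := hFi.1
    have haeSIoc : ∀ᵐ x ∂(volume.restrict (Set.Ioc (0:ℝ) 1)), g x ≤ S := by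
      rw [← hμ'Ioc]; exact haeS
    have key : ∀ᵐ x ∂(volume.restrict (Set.Ioc (0:ℝ) 1)), |g' x * F x| ≤ S * |F x| := by
      filter_upwards [haeSIoc] with x hx
      rw [abs_mul]
      exact mul_le_mul_of_nonneg_right hx (abs_nonneg _)
    have hgFi : Integrable (fun x => |g' x * F x|) (volume.restrict (Set.Ioc (0:ℝ) 1)) := by
      apply Integrable.mono' ((hFi.abs).const_mul S)
        ((hg'm.aestronglyMeasurable.mul hFaesm).norm)
      filter_upwards [key] with x hx
      simpa [Real.norm_eq_abs, abs_abs, abs_mul] using hx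
    calc (∫ x in (0:ℝ)..1, |g' x * F x|)
        = ∫ x in Set.Ioc (0:ℝ) 1, |g' x * F x| :=
          intervalIntegral.integral_of_le (by norm_num)
      _ ≤ ∫ x in Set.Ioc (0:ℝ) 1, S * |F x| :=
          integral_mono_ae hgFi ((hFi.abs).const_mul S) key
      _ = S * ∫ x in Set.Ioc (0:ℝ) 1, |F x| := by
          rw [MeasureTheory.integral_const_mul]
      _ ≤ S * 1 := by
          apply mul_le_mul_of_nonneg_left _ hS0
          rwa [intervalIntegral.integral_of_le (by norm_num : (0:ℝ) ≤ 1)] at hf1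
      _ = S := mul_one S
  -- lower bound
  have hlb : S ≤ sSup P := by
    have hPbdd : BddAbove P := ⟨S, hub⟩
    have h0P : (0:ℝ) ∈ P := by
      refine ⟨0, integrableOn_zero, by simp, by simp⟩
    apply le_of_forall_lt
    intro c hc
    rcases lt_or_ge c 0 with hc0 | hc0
    · exact lt_of_lt_of_le hc0 (le_csSup hPbdd h0P)
    set c' : ℝ := (c + S)/2 with hc'def
    have hcc' : c < c' := by rw [hc'def]; linarith
    have hc'S : c' < S := by rw [hc'def]; linarith
    have hc'pos : 0 < c' := lt_of_le_of_lt hc0 hcc'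
    set B : Set ℝ := Set.Ioo (0:ℝ) 1 ∩ {x | c' < g x} with hBdef
    have hBsub : B ⊆ Set.Ioo (0:ℝ) 1 := Set.inter_subset_left
    have hBsub' : B ⊆ Set.Ioc (0:ℝ) 1 := hBsub.trans Set.Ioo_subset_Ioc_self
    have hBmeas : MeasurableSet B :=
      measurableSet_Ioo.inter (measurableSet_lt measurable_const hgm)
    have hBpos : volume B ≠ 0 := by
      intro h0
      have hmem : c' ∈ {a : ℝ | μ' {x | a < g x} = 0} := by
        rw [Set.mem_setOf_eq, hμ'def,
          Measure.restrict_apply (measurableSet_lt measurable_const hgm)]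
        rwa [hBdef, Set.inter_comm] at h0
      have hSle : S ≤ c' := by
        rw [hSdef, essSup_eq_sInf]
        exact csInf_le ⟨0, hAlb⟩ hmem
      linarith
    -- density point
    have hne : (ae (volume.restrict B)).NeBot := by
      exact ae_neBot.2 (by rwa [Ne, Measure.restrict_eq_zero])
    obtain ⟨x₀, hx₀T, hx₀B⟩ :=
      ((Besicovitch.ae_tendsto_measure_inter_div volume B).and (ae_restrict_mem hBmeas)).exists
    obtain ⟨⟨hx₀0, hx₀1⟩, hx₀g⟩ := hx₀B
    set ε : ℝ := min ((c' - c) / (4 * c')) 1 with hεdef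
    have hεpos : 0 < ε := lt_min (div_pos (by linarith) (by linarith)) one_pos
    have hε1 : ε ≤ 1 := min_le_right _ _
    have hεne : ENNReal.ofReal ε ≠ 0 := (ENNReal.ofReal_pos.2 hεpos).ne'
    have hev1 : ∀ᶠ r in nhdsWithin (0:ℝ) (Set.Ioi 0),
        1 - ENNReal.ofReal ε <
          volume (B ∩ Metric.closedBall x₀ r) / volume (Metric.closedBall x₀ r) :=
      hx₀T.eventually (eventually_gt_nhds
        (ENNReal.sub_lt_self ENNReal.one_ne_top one_ne_zero hεne))
    have hev2 : Set.Ioo (0:ℝ) (min x₀ (1 - x₀)) ∈ nhdsWithin (0:ℝ) (Set.Ioi 0) :=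
      Ioo_mem_nhdsGT_of_mem ⟨le_refl 0, lt_min hx₀0 (by linarith)⟩
    obtain ⟨h, hratio, hh0, hhlt⟩ := (hev1.and hev2).exists
    have hhx₀ : h < x₀ := lt_of_lt_of_le hhlt (min_le_left _ _)
    have hhx₁ : x₀ + h ≤ 1 := by
      have := lt_of_lt_of_le hhlt (min_le_right _ _); linarith
    have hx₀h0 : 0 ≤ x₀ - h := by linarith
    have hhne : h ≠ 0 := hh0.ne'
    -- measure estimates
    have hvcb : volume (Metric.closedBall x₀ h) = ENNReal.ofReal (2 * h) :=
      Real.volume_closedBall x₀ h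
    have hne0 : volume (Metric.closedBall x₀ h) ≠ 0 := by
      rw [hvcb]; exact (ENNReal.ofReal_pos.2 (by linarith)).ne'
    have hnetop : volume (Metric.closedBall x₀ h) ≠ ⊤ := by
      rw [hvcb]; exact ENNReal.ofReal_ne_top
    have hBcb : (1 - ENNReal.ofReal ε) * volume (Metric.closedBall x₀ h)
        ≤ volume (B ∩ Metric.closedBall x₀ h) := by
      calc (1 - ENNReal.ofReal ε) * volume (Metric.closedBall x₀ h)
          ≤ (volume (B ∩ Metric.closedBall x₀ h) / volume (Metric.closedBall x₀ h))
            * volume (Metric.closedBall x₀ h) := mul_le_mul_left hratio.le _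
        _ = volume (B ∩ Metric.closedBall x₀ h) := ENNReal.div_mul_cancel hne0 hnetop
    set I : Set ℝ := Set.Ioc (x₀ - h) (x₀ + h) with hIdef
    have hIsub : I ⊆ Set.Ioc 0 1 := Set.Ioc_subset_Ioc (by linarith) (by linarith)
    have hIvol : volume I < ⊤ := measure_Ioc_lt_top
    have hIdiff : volume (I \ B) ≤ ENNReal.ofReal (ε * (2*h)) := by
      have h1 : I \ B ⊆ Metric.closedBall x₀ h \ B := by
        intro x hx
        refine ⟨?_, hx.2⟩
        rw [Real.closedBall_eq_Icc]
        exact Set.Ioc_subset_Icc_self hx.1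
      refine le_trans (measure_mono h1) ?_
      have h2 : volume (Metric.closedBall x₀ h \ B) + volume (Metric.closedBall x₀ h ∩ B)
          = volume (Metric.closedBall x₀ h) := by
        rw [add_comm]; exact measure_inter_add_diff _ hBmeas
      have h3 : volume (Metric.closedBall x₀ h \ B)
          = volume (Metric.closedBall x₀ h) - volume (Metric.closedBall x₀ h ∩ B) :=
        ENNReal.eq_sub_of_add_eq (ne_top_of_le_ne_top hnetop (measure_mono Set.inter_subset_left)) h2
      rw [h3]
      have h4 : (1 - ENNReal.ofReal ε) * volume (Metric.closedBall x₀ h)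
          ≤ volume (Metric.closedBall x₀ h ∩ B) := by
        rwa [Set.inter_comm]
      calc volume (Metric.closedBall x₀ h) - volume (Metric.closedBall x₀ h ∩ B)
          ≤ volume (Metric.closedBall x₀ h)
            - (1 - ENNReal.ofReal ε) * volume (Metric.closedBall x₀ h) :=
            tsub_le_tsub_left h4 _
        _ = ENNReal.ofReal ε * volume (Metric.closedBall x₀ h) := by
            have hle : ENNReal.ofReal ε ≤ 1 := by
              rw [← ENNReal.ofReal_one]; exact ENNReal.ofReal_le_ofReal hε1
            have : ENNReal.ofReal ε * volume (Metric.closedBall x₀ h)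
                + (1 - ENNReal.ofReal ε) * volume (Metric.closedBall x₀ h)
                = volume (Metric.closedBall x₀ h) := by
              rw [← add_mul, add_tsub_cancel_of_le hle, one_mul]
            exact (ENNReal.eq_sub_of_add_eq
              (ne_top_of_le_ne_top hnetop (le_trans (mul_le_mul_left
                tsub_le_self _) (by rw [one_mul]))) this).symm
        _ = ENNReal.ofReal (ε * (2*h)) := by
            rw [hvcb, ← ENNReal.ofReal_mul hεpos.le]
    have hIBreal : (volume (I \ B)).toReal ≤ ε * (2*h) :=
      ENNReal.toReal_le_of_le_ofReal (by positivity) hIdiff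
    -- the tent function
    set T : ℝ → ℝ := fun x => (2 * min x₀ x - min (x₀-h) x - min (x₀+h) x) / h^2 with hTdef
    have hTcont : Continuous T := by
      rw [hTdef]; fun_prop
    have hT0 : ∀ x, 0 ≤ T x := fun x =>
      div_nonneg (aux_tent x₀ h x hh0.le).1 (by positivity)
    have hT1 : ∀ x, T x ≤ 1/h := by
      intro x
      simp only [hTdef]
      have h2 : (2 * min x₀ x - min (x₀-h) x - min (x₀+h) x) / h^2 ≤ h / h^2 :=
        div_le_div_of_nonneg_right (aux_tent x₀ h x hh0.le).2 (by positivity)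
      refine h2.trans_eq ?_
      field_simp
    have hTout : ∀ x, (x ≤ x₀ - h ∨ x₀ + h ≤ x) → T x = 0 := by
      intro x hx
      simp only [hTdef]
      rcases hx with hx | hx
      · rw [min_eq_right hx, min_eq_right (by linarith), min_eq_right (by linarith)]
        have : 2 * x - x - x = 0 := by ring
        simp [this]
      · rw [min_eq_left hx, min_eq_left (by linarith), min_eq_left (by linarith)]
        have : 2 * x₀ - (x₀ - h) - (x₀ + h) = 0 := by ring
        simp [this]
    -- the density function f₀ and its primitive
    set f₀ : ℝ → ℝ := fun t => (Set.indicator (Set.Ioc (x₀-h) x₀) (fun _ => (1:ℝ)) t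
        - Set.indicator (Set.Ioc x₀ (x₀+h)) (fun _ => (1:ℝ)) t) / h^2 with hf₀def
    have hindint : ∀ (u v : ℝ) (s : Set ℝ),
        IntegrableOn (Set.indicator (Set.Ioc u v) (fun _ => (1:ℝ))) s volume := by
      intro u v s
      rw [IntegrableOn, integrable_indicator_iff measurableSet_Ioc]
      apply (integrableOn_const_iff).2
      right
      calc (volume.restrict s) (Set.Ioc u v) ≤ volume (Set.Ioc u v) :=
            Measure.restrict_le_self _
        _ < ⊤ := measure_Ioc_lt_top
    have hf₀int : IntegrableOn f₀ (Set.Ioo 0 1) volume := by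
      rw [hf₀def]
      exact ((hindint _ _ _).sub (hindint _ _ _)).div_const _
    have hTF : ∀ x ∈ Set.Icc (0:ℝ) 1, (∫ t in (0:ℝ)..x, f₀ t) = T x := by
      intro x hx
      have hi1 : IntervalIntegrable (Set.indicator (Set.Ioc (x₀-h) x₀) (fun _ => (1:ℝ)))
          volume 0 x :=
        (intervalIntegrable_iff_integrableOn_Ioc_of_le hx.1).2 (hindint _ _ _)
      have hi2 : IntervalIntegrable (Set.indicator (Set.Ioc x₀ (x₀+h)) (fun _ => (1:ℝ)))
          volume 0 x :=
        (intervalIntegrable_iff_integrableOn_Ioc_of_le hx.1).2 (hindint _ _ _)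
      rw [hf₀def]
      simp only
      rw [intervalIntegral.integral_div, intervalIntegral.integral_sub hi1 hi2,
        aux_ind_integral _ _ _ hx₀h0 (by linarith) hx.1,
        aux_ind_integral _ _ _ (by linarith) (by linarith) hx.1, hTdef]
      ring
    -- total integral of T is 1
    have hTint1 : ∫ x in (0:ℝ)..1, T x = 1 := by
      have hii : ∀ b : ℝ, IntervalIntegrable (fun x => min b x) volume 0 1 :=
        fun b => (continuous_const.min continuous_id).intervalIntegrable 0 1
      rw [hTdef]
      simp only
      rw [intervalIntegral.integral_div]
      rw [intervalIntegral.integral_sub (((hii x₀).const_mul 2).sub (hii (x₀-h))) (hii (x₀+h)),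
        intervalIntegral.integral_sub ((hii x₀).const_mul 2) (hii (x₀-h)),
        intervalIntegral.integral_const_mul,
        aux_min_integral x₀ (by linarith) (by linarith),
        aux_min_integral (x₀-h) hx₀h0 (by linarith),
        aux_min_integral (x₀+h) (by linarith) hhx₁]
      field_simp
      ring
    -- membership of the candidate value
    have hF₀T : ∀ x ∈ Set.uIcc (0:ℝ) 1, |∫ t in (0:ℝ)..x, f₀ t| = T x := by
      intro x hx
      rw [Set.uIcc_of_le (by norm_num : (0:ℝ) ≤ 1)] at hx
      rw [hTF x hx]
      exact abs_of_nonneg (hT0 x)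
    have hmem : (∫ x in (0:ℝ)..1, |g' x * ∫ t in (0:ℝ)..x, f₀ t|) ∈ P := by
      refine ⟨f₀, hf₀int, ?_, rfl⟩
      rw [intervalIntegral.integral_congr hF₀T, hTint1]
    refine lt_of_lt_of_le ?_ (le_csSup hPbdd hmem)
    -- now show c < the value
    have hMIoc : ∀ᵐ x ∂(volume.restrict (Set.Ioc (0:ℝ) 1)), g x ≤ M := by
      rw [← hμ'Ioc]; exact hM'
    have hTintOn : ∀ s : Set ℝ, volume s < ⊤ → IntegrableOn T s volume := by
      intro s hs
      apply Integrable.mono' ((integrableOn_const_iff (C := 1/h)).2 (Or.inr hs))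
        hTcont.aestronglyMeasurable
      apply Filter.Eventually.of_forall
      intro x
      rw [Real.norm_eq_abs, abs_of_nonneg (hT0 x)]
      exact hT1 x
    have e1 : (∫ x in (0:ℝ)..1, |g' x * ∫ t in (0:ℝ)..x, f₀ t|)
        = ∫ x in Set.Ioc (0:ℝ) 1, g x * T x := by
      rw [intervalIntegral.integral_congr (g := fun x => g x * T x) ?_,
        intervalIntegral.integral_of_le (by norm_num : (0:ℝ) ≤ 1)]
      intro x hx
      have hx' := hx
      rw [Set.uIcc_of_le (by norm_num : (0:ℝ) ≤ 1)] at hx'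
      show |g' x * ∫ t in (0:ℝ)..x, f₀ t| = g x * T x
      rw [hTF x hx', abs_mul, abs_of_nonneg (hT0 x)]
    rw [e1]
    have hgTi : Integrable (fun x => g x * T x) (volume.restrict (Set.Ioc (0:ℝ) 1)) := by
      apply Integrable.mono' ((integrableOn_const_iff (C := M * (1/h))).2
          (Or.inr measure_Ioc_lt_top))
        (hgm.aestronglyMeasurable.mul hTcont.aestronglyMeasurable)
      filter_upwards [hMIoc] with x hx
      show ‖g x * T x‖ ≤ M * (1/h)
      rw [Real.norm_eq_abs,
        abs_of_nonneg (show (0:ℝ) ≤ g x * T x from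
          mul_nonneg (abs_nonneg (g' x)) (hT0 x))]
      exact mul_le_mul hx (hT1 x) (hT0 x) hMpos.le
    have hc'Ti : Integrable (fun x => c' * T x) (volume.restrict (Set.Ioc (0:ℝ) 1)) :=
      ((hTintOn _ measure_Ioc_lt_top).const_mul c')
    have hIndInt : Integrable (B.indicator (fun x => c' * T x))
        (volume.restrict (Set.Ioc (0:ℝ) 1)) := hc'Ti.indicator hBmeas
    have step2 : ∫ x in Set.Ioc (0:ℝ) 1, B.indicator (fun x => c' * T x) x
        ≤ ∫ x in Set.Ioc (0:ℝ) 1, g x * T x := by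
      apply integral_mono hIndInt hgTi
      intro x
      by_cases hx : x ∈ B
      · rw [Set.indicator_of_mem hx]
        exact mul_le_mul_of_nonneg_right (le_of_lt hx.2) (hT0 x)
      · rw [Set.indicator_of_notMem hx]
        exact mul_nonneg (abs_nonneg _) (hT0 x)
    have step3 : ∫ x in Set.Ioc (0:ℝ) 1, B.indicator (fun x => c' * T x) x
        = c' * ∫ x in B, T x := by
      rw [setIntegral_indicator hBmeas, Set.inter_eq_self_of_subset_right hBsub',
        MeasureTheory.integral_const_mul]
    have hvolB : volume B < ⊤ :=
      lt_of_le_of_lt (measure_mono hBsub) measure_Ioo_lt_top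
    have step4 : ∫ x in I ∩ B, T x ≤ ∫ x in B, T x := by
      apply setIntegral_mono_set (hTintOn B hvolB)
        (Filter.Eventually.of_forall fun x => hT0 x)
        (Set.inter_subset_right.eventuallyLE)
    have split : (∫ x in I ∩ B, T x) + ∫ x in I \ B, T x = ∫ x in I, T x :=
      integral_inter_add_diff hBmeas (hTintOn I hIvol)
    have hIT : ∫ x in I, T x = 1 := by
      have hIoc : ∫ x in Set.Ioc (0:ℝ) 1, T x = 1 := by
        rw [← intervalIntegral.integral_of_le (by norm_num : (0:ℝ) ≤ 1), hTint1]
      have split2 : (∫ x in Set.Ioc (0:ℝ) 1 ∩ I, T x) + ∫ x in Set.Ioc (0:ℝ) 1 \ I, T x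
          = ∫ x in Set.Ioc (0:ℝ) 1, T x :=
        integral_inter_add_diff measurableSet_Ioc (hTintOn _ measure_Ioc_lt_top)
      have hzero : ∫ x in Set.Ioc (0:ℝ) 1 \ I, T x = 0 := by
        apply setIntegral_eq_zero_of_forall_eq_zero
        intro x hx
        apply hTout
        rcases hx with ⟨-, hxI⟩
        rw [hIdef, Set.mem_Ioc] at hxI
        push_neg at hxI
        rcases le_or_gt x (x₀ - h) with h' | h'
        · exact Or.inl h'
        · exact Or.inr (hxI h').le
      rw [Set.inter_eq_self_of_subset_right hIsub] at split2
      rw [hzero, add_zero, hIoc] at split2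
      exact split2
    have step5 : ∫ x in I \ B, T x ≤ 2 * ε := by
      have hvolIB : volume (I \ B) < ⊤ :=
        lt_of_le_of_lt (measure_mono Set.diff_subset) hIvol
      calc ∫ x in I \ B, T x ≤ ∫ _x in I \ B, (1/h) :=
            integral_mono (hTintOn _ hvolIB) ((integrableOn_const_iff).2 (Or.inr hvolIB))
              (fun x => hT1 x)
        _ = (volume (I \ B)).toReal * (1/h) := by
            rw [setIntegral_const, smul_eq_mul, measureReal_def]
        _ ≤ (ε * (2*h)) * (1/h) := by
            apply mul_le_mul_of_nonneg_right hIBreal (by positivity)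
        _ = 2 * ε := by field_simp
    -- put everything together
    have hBT : (1 : ℝ) - 2*ε ≤ ∫ x in B, T x := by
      have : (1:ℝ) - 2*ε ≤ ∫ x in I ∩ B, T x := by
        have := split
        linarith [step5, hIT]
      linarith [step4]
    have hεc : c' * ε ≤ (c' - c)/4 := by
      have h1 : ε ≤ (c' - c)/(4*c') := min_le_left _ _
      have h2 : c' * ε ≤ c' * ((c' - c)/(4*c')) :=
        mul_le_mul_of_nonneg_left h1 hc'pos.le
      have h3 : c' * ((c' - c)/(4*c')) = (c' - c)/4 := by
        field_simp
      linarith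
    have hexp : c' * (1 - 2*ε) = c' - 2*(c'*ε) := by ring
    calc c < c' * (1 - 2*ε) := by rw [hexp]; linarith
      _ ≤ c' * ∫ x in B, T x := mul_le_mul_of_nonneg_left hBT hc'pos.le
      _ = ∫ x in Set.Ioc (0:ℝ) 1, B.indicator (fun x => c' * T x) x := step3.symm
      _ ≤ ∫ x in Set.Ioc (0:ℝ) 1, g x * T x := step2
  exact le_antisymm (Real.sSup_le hub hS0) hlb
end

section
/- Let 0 < σ₀ ≤ σ₁ and let σ, σ̃ : ℝ → ℝ be measurable with σ₀ ≤ σ(x) ≤ σ₁ and σ₀ ≤ σ̃(x) ≤ σ₁ for almost every x ∈ (0,1). Let S denote the supremum of ∫_0^1 |(1/σ(x) − 1/σ̃(x)) · ∫_0^x f(t) dt| dx, taken over all f : ℝ → ℝ integrable on (0,1) with ∫_0^1 |∫_0^x f(t) dt| dx ≤ 1. Then σ₁⁻² · esssup_{(0,1)} |σ − σ̃| ≤ S ≤ σ₀⁻² · esssup_{(0,1)} |σ − σ̃|. -/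
open MeasureTheory intervalIntegral

lemma prim_ind (c d x : ℝ) (hc : 0 ≤ c) (hcd : c ≤ d) (hx : 0 ≤ x) :
    ∫ t in (0:ℝ)..x, (Set.Ioc c d).indicator (fun _ => (1:ℝ)) t = min x d - min x c := by
  rw [intervalIntegral.integral_of_le hx, setIntegral_indicator measurableSet_Ioc,
    Set.Ioc_inter_Ioc, setIntegral_const, smul_eq_mul, mul_one, Real.volume_real_Ioc,
    max_eq_right hc]
  rcases le_total x d with h2 | h2
  · rw [min_eq_left h2]
    rcases le_total x c with h | h
    · rw [min_eq_left h, max_eq_right (by linarith)]; ring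
    · rw [min_eq_right h, max_eq_left (by linarith)]
  · rw [min_eq_right h2, min_eq_right (hcd.trans h2), max_eq_left (by linarith)]

/-- properties of the trapezoid profile `G`. -/
lemma ramp_props (a b δ : ℝ) (hδ : 0 < δ) (hda : δ < a) (hab : a ≤ b) (x : ℝ) :
    (0 ≤ δ⁻¹ * ((min x a - min x (a-δ)) - (min x (b+δ) - min x b)) ∧
      δ⁻¹ * ((min x a - min x (a-δ)) - (min x (b+δ) - min x b)) ≤ 1) ∧
    (x ∈ Set.Ioc a b → δ⁻¹ * ((min x a - min x (a-δ)) - (min x (b+δ) - min x b)) = 1) ∧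
    (x ∉ Set.Ioc (a-δ) (b+δ) → δ⁻¹ * ((min x a - min x (a-δ)) - (min x (b+δ) - min x b)) = 0) := by
  have hδ' : δ⁻¹ * δ = 1 := inv_mul_cancel₀ hδ.ne'
  rcases le_total x (a-δ) with h1 | h1
  · have e : δ⁻¹ * ((min x a - min x (a-δ)) - (min x (b+δ) - min x b)) = 0 := by
      rw [min_eq_left (by linarith : x ≤ a), min_eq_left h1,
        min_eq_left (by linarith : x ≤ b+δ), min_eq_left (by linarith : x ≤ b)]; ring
    refine ⟨⟨by rw [e], by rw [e]; norm_num⟩, fun hx => absurd hx.1 (by push_neg; linarith),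
      fun _ => e⟩
  · rcases le_total x a with h2 | h2
    · have e : δ⁻¹ * ((min x a - min x (a-δ)) - (min x (b+δ) - min x b)) = δ⁻¹ * (x - (a-δ)) := by
        rw [min_eq_left h2, min_eq_right h1, min_eq_left (by linarith : x ≤ b+δ),
          min_eq_left (by linarith : x ≤ b)]; ring
      refine ⟨⟨by rw [e]; exact mul_nonneg (by positivity) (by linarith),
        by rw [e, ← hδ']; exact mul_le_mul_of_nonneg_left (by linarith) (by positivity)⟩,
        fun hx => absurd hx.1 (by push_neg; linarith), fun hx => ?_⟩
      rw [Set.mem_Ioc, not_and_or, not_lt, not_le] at hx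
      rcases hx with h | h
      · have : x = a - δ := le_antisymm h h1
        rw [e, this]; ring
      · linarith
    · rcases le_total x b with h3 | h3
      · have e : δ⁻¹ * ((min x a - min x (a-δ)) - (min x (b+δ) - min x b)) = 1 := by
          rw [min_eq_right h2, min_eq_right (by linarith : a - δ ≤ x),
            min_eq_left (by linarith : x ≤ b+δ), min_eq_left h3]
          rw [← hδ']; ring
        exact ⟨⟨by rw [e]; norm_num, le_of_eq e⟩, fun _ => e,
          fun hx => absurd (Set.mem_Ioc.2 ⟨by linarith, by linarith⟩) hx⟩
      · rcases le_total x (b+δ) with h4 | h4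
        · have e : δ⁻¹ * ((min x a - min x (a-δ)) - (min x (b+δ) - min x b))
              = δ⁻¹ * ((b+δ) - x) := by
            rw [min_eq_right h2, min_eq_right (by linarith : a - δ ≤ x),
              min_eq_left h4, min_eq_right h3]; ring
          refine ⟨⟨by rw [e]; exact mul_nonneg (by positivity) (by linarith),
            by rw [e, ← hδ']; exact mul_le_mul_of_nonneg_left (by linarith) (by positivity)⟩,
            fun hx => ?_, fun hx => ?_⟩
          · have hxb : x = b := le_antisymm hx.2 h3
            rw [e, hxb, show b + δ - b = δ by ring]; exact hδ'
          · rw [Set.mem_Ioc, not_and_or, not_lt, not_le] at hx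
            exfalso; rcases hx with h | h <;> linarith
        · have e : δ⁻¹ * ((min x a - min x (a-δ)) - (min x (b+δ) - min x b)) = 0 := by
            rw [min_eq_right h2, min_eq_right (by linarith : a - δ ≤ x),
              min_eq_right h4, min_eq_right h3]
            field_simp; ring
          exact ⟨⟨by rw [e], by rw [e]; norm_num⟩,
            fun hx => absurd hx.2 (by push_neg; linarith), fun _ => e⟩


/-- One-dimensional two-sided Lipschitz stability: with
`S = sup { ∫_0^1 |(1/σ(x) − 1/σ̃(x)) ∫_0^x f| dx : ∫_0^1 |∫_0^x f| dx ≤ 1 }`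
(the `‖·‖_*`-norm of `R_σ − R_σ̃`), one has
`σ₁⁻² ‖σ − σ̃‖_∞ ≤ S ≤ σ₀⁻² ‖σ − σ̃‖_∞`. -/
theorem resolvent_distance_two_sided_estimate
    (σ₀ σ₁ : ℝ) (hσ₀ : 0 < σ₀) (hσ₀₁ : σ₀ ≤ σ₁)
    (σ σ' : ℝ → ℝ) (hσm : Measurable σ) (hσ'm : Measurable σ')
    (hσb : ∀ᵐ x ∂volume, x ∈ Set.Ioo (0:ℝ) 1 → σ₀ ≤ σ x ∧ σ x ≤ σ₁)
    (hσ'b : ∀ᵐ x ∂volume, x ∈ Set.Ioo (0:ℝ) 1 → σ₀ ≤ σ' x ∧ σ' x ≤ σ₁)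
    (S : ℝ)
    (hS : S = sSup {r : ℝ | ∃ f : ℝ → ℝ, IntegrableOn f (Set.Ioo (0:ℝ) 1) volume ∧
        (∫ x in (0:ℝ)..1, |∫ t in (0:ℝ)..x, f t|) ≤ 1 ∧
        r = ∫ x in (0:ℝ)..1, |(1 / σ x - 1 / σ' x) * ∫ t in (0:ℝ)..x, f t|}) :
    (σ₁ ^ 2)⁻¹ * essSup (fun x => |σ x - σ' x|) (volume.restrict (Set.Ioo (0:ℝ) 1)) ≤ S ∧
    S ≤ (σ₀ ^ 2)⁻¹ * essSup (fun x => |σ x - σ' x|) (volume.restrict (Set.Ioo (0:ℝ) 1)) := by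
  have hσ₁ : (0:ℝ) < σ₁ := lt_of_lt_of_le hσ₀ hσ₀₁
  set M : ℝ := essSup (fun x => |σ x - σ' x|) (volume.restrict (Set.Ioo (0:ℝ) 1)) with hMdef
  set T : Set ℝ := {r : ℝ | ∃ f : ℝ → ℝ, IntegrableOn f (Set.Ioo (0:ℝ) 1) volume ∧
        (∫ x in (0:ℝ)..1, |∫ t in (0:ℝ)..x, f t|) ≤ 1 ∧
        r = ∫ x in (0:ℝ)..1, |(1 / σ x - 1 / σ' x) * ∫ t in (0:ℝ)..x, f t|} with hTdef
  have hres : (volume : Measure ℝ).restrict (Set.Ioc (0:ℝ) 1)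
      = volume.restrict (Set.Ioo (0:ℝ) 1) :=
    Measure.restrict_congr_set (Filter.EventuallyEq.symm Ioo_ae_eq_Ioc)
  have hIoc : ∀ g : ℝ → ℝ, (∫ x in (0:ℝ)..1, g x) = ∫ x in Set.Ioo (0:ℝ) 1, g x := by
    intro g
    rw [intervalIntegral.integral_of_le zero_le_one, hres]
  have haeI : ∀ᵐ x ∂volume.restrict (Set.Ioo (0:ℝ) 1),
      (σ₀ ≤ σ x ∧ σ x ≤ σ₁) ∧ (σ₀ ≤ σ' x ∧ σ' x ≤ σ₁) := by
    refine (ae_restrict_iff' measurableSet_Ioo).2 ?_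
    filter_upwards [hσb, hσ'b] with x h1 h2 hx
    exact ⟨h1 hx, h2 hx⟩
  have hWmeas : Measurable (fun x => |1 / σ x - 1 / σ' x|) :=
    ((measurable_const.div hσm).sub (measurable_const.div hσ'm)).abs
  have hWnn : ∀ x : ℝ, 0 ≤ |1 / σ x - 1 / σ' x| := fun x => abs_nonneg _
  have hWb : ∀ᵐ x ∂volume.restrict (Set.Ioo (0:ℝ) 1), |1 / σ x - 1 / σ' x| ≤ 2 / σ₀ := by
    filter_upwards [haeI] with x hx
    have h1 : 0 < σ x := lt_of_lt_of_le hσ₀ hx.1.1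
    have h2 : 0 < σ' x := lt_of_lt_of_le hσ₀ hx.2.1
    have e1 : |1 / σ x| ≤ 1 / σ₀ := by
      rw [abs_of_pos (by positivity)]
      exact one_div_le_one_div_of_le hσ₀ hx.1.1
    have e2 : |1 / σ' x| ≤ 1 / σ₀ := by
      rw [abs_of_pos (by positivity)]
      exact one_div_le_one_div_of_le hσ₀ hx.2.1
    calc |1 / σ x - 1 / σ' x| ≤ |1 / σ x| + |1 / σ' x| := abs_sub _ _
      _ ≤ 1 / σ₀ + 1 / σ₀ := add_le_add e1 e2
      _ = 2 / σ₀ := by ring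
  have hWkey : ∀ x : ℝ, σ₀ ≤ σ x → σ x ≤ σ₁ → σ₀ ≤ σ' x → σ' x ≤ σ₁ →
      (σ₁ ^ 2)⁻¹ * |σ x - σ' x| ≤ |1 / σ x - 1 / σ' x| ∧
        |1 / σ x - 1 / σ' x| ≤ (σ₀ ^ 2)⁻¹ * |σ x - σ' x| := by
    intro x a1 a2 b1 b2
    have h1 : 0 < σ x := lt_of_lt_of_le hσ₀ a1
    have h2 : 0 < σ' x := lt_of_lt_of_le hσ₀ b1
    have e : 1 / σ x - 1 / σ' x = (σ' x - σ x) / (σ x * σ' x) := by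
      field_simp
    rw [e, abs_div, abs_of_pos (mul_pos h1 h2), abs_sub_comm (σ' x) (σ x)]
    constructor
    · rw [inv_mul_eq_div]
      exact div_le_div_of_nonneg_left (abs_nonneg _) (mul_pos h1 h2) (by nlinarith)
    · rw [inv_mul_eq_div]
      exact div_le_div_of_nonneg_left (abs_nonneg _) (by positivity) (by nlinarith)
  have hdiffM : ∀ᵐ x ∂volume.restrict (Set.Ioo (0:ℝ) 1), |σ x - σ' x| ≤ M := by
    refine ae_le_essSup ⟨σ₁ - σ₀, Filter.eventually_map.mpr ?_⟩
    filter_upwards [haeI] with x hx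
    exact abs_le.2 ⟨by linarith [hx.1.1, hx.2.2], by linarith [hx.1.2, hx.2.1]⟩
  have hne : (volume.restrict (Set.Ioo (0:ℝ) 1)) ≠ 0 := by
    simp [Measure.restrict_eq_zero, Real.volume_Ioo]
  have hM0 : 0 ≤ M := by
    haveI : (ae (volume.restrict (Set.Ioo (0:ℝ) 1))).NeBot := ae_neBot.2 hne
    obtain ⟨x, hx⟩ := hdiffM.exists
    exact (abs_nonneg _).trans hx
  have hmem0 : (0:ℝ) ∈ T := by
    rw [hTdef]
    refine ⟨fun _ => 0, integrableOn_zero, by simp, by simp⟩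
  have hub : ∀ r ∈ T, r ≤ (σ₀ ^ 2)⁻¹ * M := by
    rw [hTdef]
    rintro r ⟨f, hfi, hf1, rfl⟩
    have hFcont : ContinuousOn (fun x => ∫ t in (0:ℝ)..x, f t) (Set.Icc 0 1) := by
      have := intervalIntegral.continuousOn_primitive_interval (a := (0:ℝ)) (b := 1)
        (μ := volume) (f := f) (by rwa [Set.uIcc_of_le zero_le_one,
          integrableOn_Icc_iff_integrableOn_Ioo])
      rwa [Set.uIcc_of_le zero_le_one] at this
    have hFint : IntegrableOn (fun x => |∫ t in (0:ℝ)..x, f t|) (Set.Ioo (0:ℝ) 1) volume :=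
      ((hFcont.abs).integrableOn_Icc).mono_set Set.Ioo_subset_Icc_self
    rw [hIoc] at hf1 ⊢
    refine le_trans (integral_mono_of_nonneg (Filter.Eventually.of_forall fun x => abs_nonneg _)
      (hFint.const_mul ((σ₀ ^ 2)⁻¹ * M)) ?_) ?_
    · filter_upwards [haeI, hdiffM] with x hx hxM
      have hk := (hWkey x hx.1.1 hx.1.2 hx.2.1 hx.2.2).2
      calc |(1 / σ x - 1 / σ' x) * ∫ t in (0:ℝ)..x, f t|
          = |1 / σ x - 1 / σ' x| * |∫ t in (0:ℝ)..x, f t| := abs_mul _ _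
        _ ≤ ((σ₀ ^ 2)⁻¹ * |σ x - σ' x|) * |∫ t in (0:ℝ)..x, f t| :=
            mul_le_mul_of_nonneg_right hk (abs_nonneg _)
        _ ≤ (σ₀ ^ 2)⁻¹ * M * |∫ t in (0:ℝ)..x, f t| := by
            refine mul_le_mul_of_nonneg_right ?_ (abs_nonneg _)
            exact mul_le_mul_of_nonneg_left hxM (by positivity)
    · rw [MeasureTheory.integral_const_mul]
      calc (σ₀ ^ 2)⁻¹ * M * ∫ x in Set.Ioo (0:ℝ) 1, |∫ t in (0:ℝ)..x, f t|
          ≤ (σ₀ ^ 2)⁻¹ * M * 1 :=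
            mul_le_mul_of_nonneg_left hf1 (mul_nonneg (by positivity) hM0)
        _ = (σ₀ ^ 2)⁻¹ * M := mul_one _
  have hbddT : BddAbove T := ⟨_, hub⟩
  have hS0 : 0 ≤ S := hS ▸ le_csSup hbddT hmem0
  have hupper : S ≤ (σ₀ ^ 2)⁻¹ * M := hS ▸ csSup_le ⟨0, hmem0⟩ hub
  have stepA : ∀ a b : ℝ, 0 < a → a < b → b < 1 →
      (∫ x in a..b, |1 / σ x - 1 / σ' x|) ≤ S * (b - a) := by
    intro a b ha hab hb1
    have key : ∀ δ : ℝ, 0 < δ → δ < a → b + δ < 1 →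
        (∫ x in a..b, |1 / σ x - 1 / σ' x|) ≤ S * (b - a + 2 * δ) := by
      intro δ hδ hδa hbδ
      set G : ℝ → ℝ :=
        fun x => δ⁻¹ * ((min x a - min x (a - δ)) - (min x (b + δ) - min x b)) with hGdef
      have hGcont : Continuous G := by
        apply Continuous.mul continuous_const
        exact ((continuous_id.min continuous_const).sub
          (continuous_id.min continuous_const)).sub
          ((continuous_id.min continuous_const).sub (continuous_id.min continuous_const))
      have hprops : ∀ x : ℝ, (0 ≤ G x ∧ G x ≤ 1) ∧ (x ∈ Set.Ioc a b → G x = 1) ∧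
          (x ∉ Set.Ioc (a - δ) (b + δ) → G x = 0) := by
        intro x
        simp only [hGdef]
        exact ramp_props a b δ hδ hδa hab.le x
      have hind : ∀ c d : ℝ, Integrable ((Set.Ioc c d).indicator (fun _ => (1:ℝ))) volume := by
        intro c d
        refine (integrableOn_const ?_).integrable_indicator measurableSet_Ioc
        rw [Real.volume_Ioc]; exact ENNReal.ofReal_ne_top
      set f : ℝ → ℝ := fun t => δ⁻¹ * ((Set.Ioc (a - δ) a).indicator (fun _ => (1:ℝ)) t -
        (Set.Ioc b (b + δ)).indicator (fun _ => (1:ℝ)) t) with hfdef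
      have hfint : Integrable f volume := ((hind (a - δ) a).sub (hind b (b + δ))).const_mul _
      have hF : ∀ x : ℝ, 0 ≤ x → (∫ t in (0:ℝ)..x, f t) = G x := by
        intro x hx
        simp only [hfdef, hGdef]
        rw [intervalIntegral.integral_const_mul,
          intervalIntegral.integral_sub (hind _ _).intervalIntegrable
            (hind _ _).intervalIntegrable,
          prim_ind (a - δ) a x (by linarith) (by linarith) hx,
          prim_ind b (b + δ) x (by linarith) (by linarith) hx]
      have hGint : IntegrableOn G (Set.Ioo (0:ℝ) 1) volume :=
        (hGcont.integrableOn_Icc).mono_set Set.Ioo_subset_Icc_self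
      have hindIcc : ∀ c d : ℝ, IntegrableOn ((Set.Ioc c d).indicator (fun _ => (1:ℝ)))
          (Set.Ioo (0:ℝ) 1) volume := fun c d => (hind c d).integrableOn
      set N : ℝ := ∫ x in Set.Ioo (0:ℝ) 1, G x with hNdef
      have hNlb : b - a ≤ N := by
        have h1 : (∫ x in Set.Ioo (0:ℝ) 1, (Set.Ioc a b).indicator (fun _ => (1:ℝ)) x)
            = b - a := by
          rw [← hIoc, prim_ind a b 1 (by linarith) hab.le zero_le_one,
            min_eq_right hb1.le, min_eq_right (by linarith : a ≤ 1)]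
        rw [hNdef, ← h1]
        refine setIntegral_mono_on (hindIcc a b) hGint measurableSet_Ioo fun x hx => ?_
        by_cases hxab : x ∈ Set.Ioc a b
        · rw [Set.indicator_of_mem hxab]
          exact le_of_eq ((hprops x).2.1 hxab).symm
        · rw [Set.indicator_of_notMem hxab]
          exact (hprops x).1.1
      have hNub : N ≤ b - a + 2 * δ := by
        have h1 : (∫ x in Set.Ioo (0:ℝ) 1, (Set.Ioc (a - δ) (b + δ)).indicator
            (fun _ => (1:ℝ)) x) = b - a + 2 * δ := by
          rw [← hIoc, prim_ind (a - δ) (b + δ) 1 (by linarith) (by linarith) zero_le_one,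
            min_eq_right (by linarith : b + δ ≤ 1), min_eq_right (by linarith : a - δ ≤ 1)]
          ring
        rw [hNdef, ← h1]
        refine setIntegral_mono_on hGint (hindIcc _ _) measurableSet_Ioo fun x hx => ?_
        by_cases hxin : x ∈ Set.Ioc (a - δ) (b + δ)
        · rw [Set.indicator_of_mem hxin]
          exact (hprops x).1.2
        · rw [Set.indicator_of_notMem hxin, (hprops x).2.2 hxin]
      have hN0 : 0 < N := lt_of_lt_of_le (by linarith) hNlb
      have hmem : (∫ x in (0:ℝ)..1, |(1 / σ x - 1 / σ' x) * ∫ t in (0:ℝ)..x, N⁻¹ * f t|) ∈ T := by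
        rw [hTdef]
        refine ⟨fun t => N⁻¹ * f t, (hfint.const_mul _).integrableOn, ?_, rfl⟩
        have he : Set.EqOn (fun x => |∫ t in (0:ℝ)..x, N⁻¹ * f t|)
            (fun x => N⁻¹ * G x) (Set.uIcc 0 1) := by
          intro x hx
          rw [Set.uIcc_of_le zero_le_one] at hx
          simp only
          rw [intervalIntegral.integral_const_mul, hF x hx.1, abs_mul,
            abs_of_nonneg (inv_nonneg.2 hN0.le), abs_of_nonneg (hprops x).1.1]
        rw [intervalIntegral.integral_congr he, intervalIntegral.integral_const_mul, hIoc,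
          ← hNdef, inv_mul_cancel₀ hN0.ne']
      have hrS : (∫ x in (0:ℝ)..1, |(1 / σ x - 1 / σ' x) * ∫ t in (0:ℝ)..x, N⁻¹ * f t|) ≤ S :=
        hS ▸ le_csSup hbddT hmem
      have hconst : ((volume : Measure ℝ) (Set.Ioo 0 1)) < ⊤ := by
        rw [Real.volume_Ioo]; exact ENNReal.ofReal_lt_top
      have hWG_int : IntegrableOn (fun x => |1 / σ x - 1 / σ' x| * G x)
          (Set.Ioo (0:ℝ) 1) volume := by
        refine Integrable.mono' (g := fun _ => 2 / σ₀) (integrableOn_const hconst.ne)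
          ((hWmeas.mul hGcont.measurable).aestronglyMeasurable) ?_
        filter_upwards [hWb] with x hx
        rw [Real.norm_eq_abs, abs_of_nonneg (mul_nonneg (hWnn x) (hprops x).1.1)]
        calc |1 / σ x - 1 / σ' x| * G x ≤ |1 / σ x - 1 / σ' x| * 1 :=
              mul_le_mul_of_nonneg_left (hprops x).1.2 (hWnn x)
          _ = |1 / σ x - 1 / σ' x| := mul_one _
          _ ≤ 2 / σ₀ := hx
      have hindW_int : IntegrableOn ((Set.Ioc a b).indicator (fun x => |1 / σ x - 1 / σ' x|))
          (Set.Ioo (0:ℝ) 1) volume := by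
        refine Integrable.mono' (g := fun _ => 2 / σ₀) (integrableOn_const hconst.ne)
          ((hWmeas.indicator measurableSet_Ioc).aestronglyMeasurable) ?_
        filter_upwards [hWb] with x hx
        rw [Real.norm_eq_abs]
        by_cases h : x ∈ Set.Ioc a b
        · rw [Set.indicator_of_mem h, abs_of_nonneg (hWnn x)]
          exact hx
        · rw [Set.indicator_of_notMem h]
          simpa using (by positivity : (0:ℝ) ≤ 2 / σ₀)
      have hlow : (∫ x in a..b, |1 / σ x - 1 / σ' x|)
          ≤ ∫ x in Set.Ioo (0:ℝ) 1, |1 / σ x - 1 / σ' x| * G x := by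
        have h1 : (∫ x in a..b, |1 / σ x - 1 / σ' x|) = ∫ x in Set.Ioo (0:ℝ) 1,
            (Set.Ioc a b).indicator (fun x => |1 / σ x - 1 / σ' x|) x := by
          rw [setIntegral_indicator measurableSet_Ioc,
            Set.inter_eq_self_of_subset_right
              (by intro x hx; exact ⟨lt_trans ha hx.1, lt_of_le_of_lt hx.2 hb1⟩ :
                Set.Ioc a b ⊆ Set.Ioo 0 1),
            intervalIntegral.integral_of_le hab.le, integral_Ioc_eq_integral_Ioo]
        rw [h1]
        refine setIntegral_mono_on hindW_int hWG_int measurableSet_Ioo fun x hx => ?_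
        by_cases h : x ∈ Set.Ioc a b
        · rw [Set.indicator_of_mem h, (hprops x).2.1 h, mul_one]
        · rw [Set.indicator_of_notMem h]
          exact mul_nonneg (hWnn x) (hprops x).1.1
      have hreq : (∫ x in (0:ℝ)..1, |(1 / σ x - 1 / σ' x) * ∫ t in (0:ℝ)..x, N⁻¹ * f t|)
          = N⁻¹ * ∫ x in Set.Ioo (0:ℝ) 1, |1 / σ x - 1 / σ' x| * G x := by
        have he : Set.EqOn (fun x => |(1 / σ x - 1 / σ' x) * ∫ t in (0:ℝ)..x, N⁻¹ * f t|)
            (fun x => N⁻¹ * (|1 / σ x - 1 / σ' x| * G x)) (Set.uIcc 0 1) := by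
          intro x hx
          rw [Set.uIcc_of_le zero_le_one] at hx
          simp only
          rw [intervalIntegral.integral_const_mul, hF x hx.1, abs_mul, abs_mul,
            abs_of_nonneg (inv_nonneg.2 hN0.le), abs_of_nonneg (hprops x).1.1]
          ring
        rw [intervalIntegral.integral_congr he, intervalIntegral.integral_const_mul, hIoc]
      have hchain : (∫ x in a..b, |1 / σ x - 1 / σ' x|) ≤ N * S := by
        calc (∫ x in a..b, |1 / σ x - 1 / σ' x|)
            ≤ ∫ x in Set.Ioo (0:ℝ) 1, |1 / σ x - 1 / σ' x| * G x := hlow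
          _ = N * (N⁻¹ * ∫ x in Set.Ioo (0:ℝ) 1, |1 / σ x - 1 / σ' x| * G x) := by
              rw [← mul_assoc, mul_inv_cancel₀ hN0.ne', one_mul]
          _ = N * (∫ x in (0:ℝ)..1, |(1 / σ x - 1 / σ' x) * ∫ t in (0:ℝ)..x, N⁻¹ * f t|) := by
              rw [hreq]
          _ ≤ N * S := mul_le_mul_of_nonneg_left hrS hN0.le
      calc (∫ x in a..b, |1 / σ x - 1 / σ' x|) ≤ N * S := hchain
        _ ≤ (b - a + 2 * δ) * S := mul_le_mul_of_nonneg_right hNub hS0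
        _ = S * (b - a + 2 * δ) := mul_comm _ _
    refine le_of_forall_pos_le_add fun ε hε => ?_
    set δ : ℝ := min (min (a / 2) ((1 - b) / 2)) (ε / (2 * (S + 1))) with hδdef
    have hδ0 : 0 < δ := lt_min (lt_min (by linarith) (by linarith)) (by positivity)
    have h1 : δ < a := lt_of_le_of_lt ((min_le_left _ _).trans (min_le_left _ _)) (by linarith)
    have h2 : b + δ < 1 := by
      have hd : δ ≤ (1 - b) / 2 :=
        (min_le_left (min (a / 2) ((1 - b) / 2)) (ε / (2 * (S + 1)))).trans
          (min_le_right (a / 2) ((1 - b) / 2))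
      linarith
    have h3 : δ ≤ ε / (2 * (S + 1)) := min_le_right _ _
    have hkey := key δ hδ0 h1 h2
    have h4 : S * (2 * δ) ≤ ε := by
      have h5 : S * (2 * δ) ≤ S * (2 * (ε / (2 * (S + 1)))) := by
        refine mul_le_mul_of_nonneg_left (by linarith) hS0
      have h6 : S * (2 * (ε / (2 * (S + 1)))) = S / (S + 1) * ε := by
        field_simp
      have h7 : S / (S + 1) ≤ 1 := by
        rw [div_le_one (by linarith)]
        linarith
      have h8 : S / (S + 1) * ε ≤ 1 * ε :=
        mul_le_mul_of_nonneg_right h7 hε.le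
      linarith
    have h9 : S * (b - a + 2 * δ) = S * (b - a) + S * (2 * δ) := by ring
    linarith
  have stepB : ∀ᵐ x ∂volume.restrict (Set.Ioo (0:ℝ) 1), |1 / σ x - 1 / σ' x| ≤ S := by
    have hgloc : LocallyIntegrable
        ((Set.Ioo (0:ℝ) 1).indicator (fun x => |1 / σ x - 1 / σ' x|)) volume := by
      apply Integrable.locallyIntegrable
      have hconst2 : ((volume : Measure ℝ) (Set.Ioo (0:ℝ) 1)) < ⊤ := by
        rw [Real.volume_Ioo]; exact ENNReal.ofReal_lt_top
      refine Integrable.mono' (g := (Set.Ioo (0:ℝ) 1).indicator (fun _ => 2 / σ₀))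
        ((integrableOn_const hconst2.ne).integrable_indicator measurableSet_Ioo)
        ((hWmeas.indicator measurableSet_Ioo).aestronglyMeasurable) ?_
      filter_upwards [(ae_restrict_iff' measurableSet_Ioo).1 hWb] with x hx
      rw [Real.norm_eq_abs]
      by_cases h : x ∈ Set.Ioo (0:ℝ) 1
      · rw [Set.indicator_of_mem h, Set.indicator_of_mem h, abs_of_nonneg (hWnn x)]
        exact hx h
      · rw [Set.indicator_of_notMem h, Set.indicator_of_notMem h]
        simp
    have hdiff := IsUnifLocDoublingMeasure.ae_tendsto_average (μ := (volume : Measure ℝ))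
      hgloc 1
    refine (ae_restrict_iff' measurableSet_Ioo).2 ?_
    filter_upwards [hdiff] with x hx hxI
    have hev : ∀ᶠ t in nhdsWithin (0:ℝ) (Set.Ioi 0),
        x ∈ Metric.closedBall ((fun _ : ℝ => x) t) (1 * (id t : ℝ)) := by
      filter_upwards [self_mem_nhdsWithin] with t ht
      exact Metric.mem_closedBall_self (by simp only [one_mul, id]; exact le_of_lt ht)
    have hxt := hx (fun _ : ℝ => x) id Filter.tendsto_id hev
    have hb : ∀ᶠ t in nhdsWithin (0:ℝ) (Set.Ioi 0),
        (⨍ y in Metric.closedBall x (id t),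
          (Set.Ioo (0:ℝ) 1).indicator (fun x => |1 / σ x - 1 / σ' x|) y) ≤ S := by
      have hmem : Set.Ioo (0:ℝ) (min x (1 - x)) ∈ nhdsWithin (0:ℝ) (Set.Ioi 0) :=
        Ioo_mem_nhdsGT_of_mem ⟨le_refl 0, lt_min hxI.1 (by linarith [hxI.2])⟩
      filter_upwards [hmem] with t ht
      obtain ⟨ht0, htm⟩ := ht
      have hta : 0 < x - t := by
        have := lt_min_iff.1 htm
        linarith [this.1]
      have htb : x + t < 1 := by
        have := lt_min_iff.1 htm
        linarith [this.2]
      have hint : (∫ y in Set.Icc (x - t) (x + t),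
          (Set.Ioo (0:ℝ) 1).indicator (fun x => |1 / σ x - 1 / σ' x|) y)
          = ∫ y in (x - t)..(x + t), |1 / σ y - 1 / σ' y| := by
        rw [integral_Icc_eq_integral_Ioc, intervalIntegral.integral_of_le (by linarith)]
        refine setIntegral_congr_fun measurableSet_Ioc fun y hy => ?_
        have hy1 : (0:ℝ) < y := by linarith [hy.1]
        have hy2 : y < 1 := by linarith [hy.2]
        rw [Set.indicator_of_mem (Set.mem_Ioo.2 ⟨hy1, hy2⟩)]
      have hA := stepA (x - t) (x + t) hta (by linarith) htb
      rw [id, setAverage_eq, Real.closedBall_eq_Icc, hint, Real.volume_real_Icc_of_le (by linarith : x - t ≤ x + t), smul_eq_mul,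
        show x + t - (x - t) = 2 * t by ring]
      calc (2 * t)⁻¹ * ∫ y in (x - t)..(x + t), |1 / σ y - 1 / σ' y|
          ≤ (2 * t)⁻¹ * (S * (2 * t)) := by
            refine mul_le_mul_of_nonneg_left ?_ (by positivity)
            rw [show x + t - (x - t) = 2 * t by ring] at hA
            exact hA
        _ = S := by field_simp
    have hgx := le_of_tendsto hxt hb
    rwa [Set.indicator_of_mem hxI] at hgx
  have hfinal : M ≤ σ₁ ^ 2 * S := by
    rw [hMdef]
    haveI : (ae (volume.restrict (Set.Ioo (0:ℝ) 1))).NeBot := ae_neBot.2 hne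
    refine Filter.limsup_le_of_le (Filter.isCoboundedUnder_le_of_le _ fun x => abs_nonneg _) ?_
    filter_upwards [haeI, stepB] with x hx hxS
    have h := (hWkey x hx.1.1 hx.1.2 hx.2.1 hx.2.2).1
    have hpos : (0:ℝ) < σ₁ ^ 2 := by positivity
    calc |σ x - σ' x| = σ₁ ^ 2 * ((σ₁ ^ 2)⁻¹ * |σ x - σ' x|) := by
          field_simp
      _ ≤ σ₁ ^ 2 * S := mul_le_mul_of_nonneg_left (h.trans hxS) hpos.le
  exact ⟨(inv_mul_le_iff₀ (by positivity)).2 hfinal, hupper⟩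
end
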